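/- arXiv:0707.2890 — 3 statements merged into one kernel-verified Lean document; each statement's English description precedes it below -/
import Mathlib

section
/- There are exactly four simple level-2 generators up to isomorphism. -/
namespace Phylo

variable {V : Type*}

/-- In-degree of a vertex in a directed graph given by relation `R`. -/
noncomputable def inDeg (R : V → V → Prop) (v : V) : ℕ := {u | R u v}.ncard

/-- Out-degree of a vertex. -/
noncomputable def outDeg (R : V → V → Prop) (v : V) : ℕ := {w | R v w}.ncard

/-- A phylogenetic network: an acyclic digraph with a unique root of indegree 0 and
outdegree 2, in which every vertex is the root, a split vertex (indeg 1, outdeg 2),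
a recombination vertex (indeg 2, outdeg 1) or a leaf (indeg 1, outdeg 0). -/
def IsPhyloNet (R : V → V → Prop) : Prop :=
  (∀ v, ¬ Relation.TransGen R v v) ∧
  (∃! r, inDeg R r = 0) ∧
  (∀ v : V, (inDeg R v = 0 ∧ outDeg R v = 2) ∨ (inDeg R v = 1 ∧ outDeg R v = 2) ∨
    (inDeg R v = 2 ∧ outDeg R v = 1) ∨ (inDeg R v = 1 ∧ outDeg R v = 0))

/-- A leaf is a vertex of outdegree 0. -/
def IsLf (R : V → V → Prop) (v : V) : Prop := outDeg R v = 0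

/-- The set of leaves of a network. -/
def netLeaves (R : V → V → Prop) : Set V := {v | IsLf R v}

/-- `p` is a directed path (as a nonempty list of vertices) from `a` to `b`. -/
def IsPth (R : V → V → Prop) (p : List V) (a b : V) : Prop :=
  p ≠ [] ∧ p.head? = some a ∧ p.getLast? = some b ∧ p.Chain' R

/-- Internal vertices of a path. -/
def interior (p : List V) : List V := p.tail.dropLast

/-- Two paths are internally vertex-disjoint. -/
def IntDisj (p q : List V) : Prop :=
  (∀ v ∈ interior p, v ∉ q) ∧ (∀ v ∈ interior q, v ∉ p)

/-- The triplet xy|z is consistent with the network `R`: there are `u ≠ v` and pairwise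
internally vertex-disjoint paths `u→x`, `u→y`, `v→u`, `v→z`. -/
def ConsistentTrip (R : V → V → Prop) (x y z : V) : Prop :=
  ∃ u v : V, ∃ p1 p2 p3 p4 : List V, u ≠ v ∧
    IsPth R p1 u x ∧ IsPth R p2 u y ∧ IsPth R p3 v u ∧ IsPth R p4 v z ∧
    IntDisj p1 p2 ∧ IntDisj p1 p3 ∧ IntDisj p1 p4 ∧
    IntDisj p2 p3 ∧ IntDisj p2 p4 ∧ IntDisj p3 p4

/-- `(x,y,z) ∈ T` codes the rooted triplet xy|z; `trip T x y z` says xy|z ∈ T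
(taking into account the symmetry xy|z = yx|z). -/
def trip (T : Set (V × V × V)) (x y z : V) : Prop := (x, y, z) ∈ T ∨ (y, x, z) ∈ T

/-- The leaf set L(T) of a triplet set. -/
def tripLeaves (T : Set (V × V × V)) : Set V :=
  {a | ∃ t ∈ T, a = t.1 ∨ a = t.2.1 ∨ a = t.2.2}

/-- `T` is dense: every 3-element subset of L(T) supports at least one triplet of `T`. -/
def DenseT (T : Set (V × V × V)) : Prop :=
  ∀ x y z, x ∈ tripLeaves T → y ∈ tripLeaves T → z ∈ tripLeaves T →
    x ≠ y → x ≠ z → y ≠ z → trip T x y z ∨ trip T x z y ∨ trip T y z x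

/-- An SN-set of `T`: a subset of L(T) closed under the operation
`S_T(X) = X ∪ {c | ∃ x y ∈ X, xc|y ∈ T}`. -/
def IsSNSet (T : Set (V × V × V)) (Y : Set V) : Prop :=
  Y ⊆ tripLeaves T ∧
    ∀ ⦃c x y : V⦄, x ∈ Y → y ∈ Y → c ∈ tripLeaves T → trip T x c y → c ∈ Y

/-- `SN T X`: the closure of `X` under `S_T`, i.e. the smallest SN-superset of `X`. -/
def SN (T : Set (V × V × V)) (X : Set V) : Set V := ⋂₀ {Y | X ⊆ Y ∧ IsSNSet T Y}

/-- A maximal SN-set: a proper SN-set such that the only SN-set strictly containing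
it is L(T) itself. -/
def MaxSN (T : Set (V × V × V)) (S : Set V) : Prop :=
  IsSNSet T S ∧ S ≠ tripLeaves T ∧ ∀ Y, IsSNSet T Y → S ⊂ Y → Y = tripLeaves T

/-- A network is consistent with a triplet set if it is consistent with every triplet. -/
def ConsistentSet (R : V → V → Prop) (T : Set (V × V × V)) : Prop :=
  ∀ t ∈ T, ConsistentTrip R t.1 t.2.1 t.2.2

/-- A cut-arc: an arc whose removal disconnects the underlying undirected graph. -/
def CutArc (R : V → V → Prop) (u v : V) : Prop :=
  R u v ∧ ∃ a b : V, ¬ Relation.ReflTransGen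
    (fun p q => (R p q ∨ R q p) ∧ ¬((p = u ∧ q = v) ∨ (p = v ∧ q = u))) a b

/-- The set of leaves below the arc `(u,v)`: leaves reachable from `v`. -/
def leavesBelow (R : V → V → Prop) (u v : V) : Set V :=
  {ℓ | IsLf R ℓ ∧ Relation.ReflTransGen R v ℓ}

/-- A highest cut-arc: a cut-arc `(u,v)` such that there is no cut-arc `(u',v')`
with `u` reachable from `v'`. -/
def HighestCutArc (R : V → V → Prop) (u v : V) : Prop :=
  CutArc R u v ∧ ∀ u' v', CutArc R u' v' → ¬ Relation.ReflTransGen R v' u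

/-- The subset `S` is connected in the underlying undirected graph. -/
def ConnOn (R : V → V → Prop) (S : Set V) : Prop :=
  ∀ a ∈ S, ∀ b ∈ S,
    Relation.ReflTransGen (fun p q => p ∈ S ∧ q ∈ S ∧ (R p q ∨ R q p)) a b

/-- `S` induces a biconnected subgraph containing at least one arc. -/
def BiconnSet (R : V → V → Prop) (S : Set V) : Prop :=
  (∃ a ∈ S, ∃ b ∈ S, R a b) ∧ ConnOn R S ∧ ∀ w ∈ S, ConnOn R (S \ {w})

/-- A biconnected component: a maximal biconnected vertex set. -/
def IsBCC (R : V → V → Prop) (S : Set V) : Prop :=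
  BiconnSet R S ∧ ∀ S', BiconnSet R S' → S ⊆ S' → S' = S

/-- A level-k network: every biconnected component has at most `k` recombination
vertices. -/
def LevelK (k : ℕ) (R : V → V → Prop) : Prop :=
  ∀ S, IsBCC R S → ({v ∈ S | inDeg R v = 2}).ncard ≤ k

/-- A valid (non-redundant) network: every nontrivial biconnected component has at
least three outgoing arcs. -/
def GoodNet (R : V → V → Prop) : Prop :=
  IsPhyloNet R ∧ ∀ S, IsBCC R S → 3 ≤ S.ncard →
    3 ≤ {p : V × V | R p.1 p.2 ∧ p.1 ∈ S ∧ p.2 ∉ S}.ncard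

end Phylo
namespace Phylo

/-- A directed multigraph, given by an edge type with source and target maps. -/
structure MultiDigraph : Type 1 where
  W : Type
  E : Type
  src : E → W
  tgt : E → W

/-- Adjacency in a multigraph. -/
def mAdj (G : MultiDigraph) (a b : G.W) : Prop := ∃ e, G.src e = a ∧ G.tgt e = b

/-- In-degree in a multigraph (counting multiplicities). -/
noncomputable def mInDeg (G : MultiDigraph) (v : G.W) : ℕ := {e | G.tgt e = v}.ncard

/-- Out-degree in a multigraph (counting multiplicities). -/
noncomputable def mOutDeg (G : MultiDigraph) (v : G.W) : ℕ := {e | G.src e = v}.ncard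

/-- A simple level-k generator: a finite biconnected acyclic multigraph with a unique
root (indeg 0, outdeg 2), exactly `k` recombination vertices (indeg 2, outdeg ≤ 1),
all other vertices being split vertices (indeg 1, outdeg 2). -/
def IsGenerator (k : ℕ) (G : MultiDigraph) : Prop :=
  Finite G.W ∧ Finite G.E ∧
  (∀ v, ¬ Relation.TransGen (mAdj G) v v) ∧
  (∀ a b : G.W, Relation.ReflTransGen (fun p q => mAdj G p q ∨ mAdj G q p) a b) ∧
  (∀ w a b : G.W, a ≠ w → b ≠ w →
    Relation.ReflTransGen (fun p q => p ≠ w ∧ q ≠ w ∧ (mAdj G p q ∨ mAdj G q p)) a b) ∧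
  (∃! r, mInDeg G r = 0) ∧
  {v | mInDeg G v = 2}.ncard = k ∧
  (∀ v : G.W, (mInDeg G v = 0 ∧ mOutDeg G v = 2) ∨
    (mInDeg G v = 2 ∧ mOutDeg G v ≤ 1) ∨ (mInDeg G v = 1 ∧ mOutDeg G v = 2))

/-- Isomorphism of multigraphs. -/
def MIso (G H : MultiDigraph) : Prop :=
  ∃ (f : G.W → H.W) (g : G.E → H.E), Function.Bijective f ∧ Function.Bijective g ∧
    (∀ e, H.src (g e) = f (G.src e)) ∧ (∀ e, H.tgt (g e) = f (G.tgt e))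

variable {V : Type*}

/-- `a` and `b` are consecutive in the list `l`. -/
def Adjac (l : List V) (a b : V) : Prop := ∃ l1 l2, l = l1 ++ a :: b :: l2

/-- The path in the network replacing the generator arc `e`. -/
def fullPath (G : MultiDigraph) (φ : G.W → V) (ψ : G.E → List V) (e : G.E) : List V :=
  φ (G.src e) :: ψ e ++ [φ (G.tgt e)]

/-- The network `R` is obtained from the generator `G` by the leaf-hanging
transformation: each arc of `G` is replaced by a path, every internal vertex of such
a path gets a new leaf child, and every indeg-2 outdeg-0 generator vertex gets a new
leaf child; these account for all vertices and arcs of `R`. -/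
def SimpleFrom (G : MultiDigraph) (R : V → V → Prop) : Prop :=
  IsPhyloNet R ∧
  ∃ (φ : G.W → V) (ψ : G.E → List V),
    Function.Injective φ ∧
    (∀ e, (fullPath G φ ψ e).Chain' R) ∧
    (∀ e, (ψ e).Nodup) ∧
    (∀ e e', e ≠ e' → ∀ x ∈ ψ e, x ∉ ψ e') ∧
    (∀ e, ∀ x ∈ ψ e, ∀ w, x ≠ φ w) ∧
    (∀ e, ∀ x ∈ ψ e, ∃ ℓ, IsLf R ℓ ∧ R x ℓ) ∧
    (∀ w, mInDeg G w = 2 → mOutDeg G w = 0 → ∃ ℓ, IsLf R ℓ ∧ R (φ w) ℓ) ∧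
    (∀ v : V, (∃ w, v = φ w) ∨ (∃ e, v ∈ ψ e) ∨ IsLf R v) ∧
    (∀ a b : V, R a b → (∃ e, Adjac (fullPath G φ ψ e) a b) ∨
      (IsLf R b ∧ ((∃ e, a ∈ ψ e) ∨ ∃ w, mInDeg G w = 2 ∧ mOutDeg G w = 0 ∧ a = φ w)))

/-- A simple level-k network: one obtained from some simple level-k generator by
leaf hanging. -/
def SimpleLevel (k : ℕ) (R : V → V → Prop) : Prop :=
  ∃ G : MultiDigraph, IsGenerator k G ∧ SimpleFrom G R

/-- The basic tree: a root with exactly two leaf children. -/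
def BasicTree (R : V → V → Prop) : Prop :=
  ∃ r a b : V, r ≠ a ∧ r ≠ b ∧ a ≠ b ∧ (∀ v : V, v = r ∨ v = a ∨ v = b) ∧
    ∀ x y : V, R x y ↔ (x = r ∧ (y = a ∨ y = b))

/-- A simple level-≤2 network: a basic tree, a simple level-1 network or a simple
level-2 network. -/
def SimpleLE2 (R : V → V → Prop) : Prop :=
  BasicTree R ∨ SimpleLevel 1 R ∨ SimpleLevel 2 R

end Phylo
namespace Phylo
section StmtEight

/-! ### Generic helpers -/

lemma ncard0' {α : Type*} [Finite α] {s : Set α} (h : s.ncard = 0) : ∀ x, x ∉ s := by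
  rw [Set.ncard_eq_zero s.toFinite] at h; simp [h]

lemma ncard1' {α : Type*} {s : Set α} (h : s.ncard = 1) : ∃ a, a ∈ s ∧ ∀ x ∈ s, x = a := by
  obtain ⟨a, rfl⟩ := Set.ncard_eq_one.mp h
  exact ⟨a, rfl, fun x hx => hx⟩

lemma ncard2' {α : Type*} {s : Set α} (h : s.ncard = 2) :
    ∃ a b, a ≠ b ∧ a ∈ s ∧ b ∈ s ∧ ∀ x ∈ s, x = a ∨ x = b := by
  obtain ⟨a, b, hab, rfl⟩ := Set.ncard_eq_two.mp h
  exact ⟨a, b, hab, by simp, by simp, fun x hx => hx⟩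

lemma pair_char' {α : Type*} {s : Set α} (h : s.ncard = 2) {a b} (ha : a ∈ s) (hb : b ∈ s)
    (hab : a ≠ b) : ∀ x ∈ s, x = a ∨ x = b := by
  obtain ⟨x, y, hxy, hx, hy, hchar⟩ := ncard2' h
  intro z hz
  rcases hchar a ha with rfl|rfl <;> rcases hchar b hb with rfl|rfl <;>
    rcases hchar z hz with rfl|rfl <;> tauto

lemma pigeon3 {α : Type*} {x y z a b : α} (hx : x = a ∨ x = b) (hy : y = a ∨ y = b)
    (hz : z = a ∨ z = b) (hxy : x ≠ y) (hxz : x ≠ z) (hyz : y ≠ z) : False := by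
  rcases hx with rfl|rfl <;> rcases hy with rfl|rfl <;> rcases hz with rfl|rfl <;> simp_all

lemma not_rtg {α : Type*} {r' : α → α → Prop} {S : Set α} {a b : α} (ha : a ∈ S) (hb : b ∉ S)
    (hcl : ∀ x ∈ S, ∀ y, r' x y → y ∈ S) : ¬ Relation.ReflTransGen r' a b := by
  intro h
  have key : ∀ c, Relation.ReflTransGen r' a c → c ∈ S := by
    intro c hc
    induction hc with
    | refl => exact ha
    | tail _ hs ih => exact hcl _ ih _ hs
  exact hb (key b h)

/-! ### Degree helpers -/

lemma in0 (G : MultiDigraph) [Finite G.E] {v : G.W} (h : mInDeg G v = 0) :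
    ∀ e, G.tgt e ≠ v :=
  fun e he => ncard0' (s := {e | G.tgt e = v}) h e he

lemma out0 (G : MultiDigraph) [Finite G.E] {v : G.W} (h : mOutDeg G v = 0) :
    ∀ e, G.src e ≠ v :=
  fun e he => ncard0' (s := {e | G.src e = v}) h e he

lemma in1 (G : MultiDigraph) {v : G.W} (h : mInDeg G v = 1) :
    ∃ a, G.tgt a = v ∧ ∀ e, G.tgt e = v → e = a :=
  ncard1' (s := {e | G.tgt e = v}) h

lemma out1 (G : MultiDigraph) {v : G.W} (h : mOutDeg G v = 1) :
    ∃ a, G.src a = v ∧ ∀ e, G.src e = v → e = a :=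
  ncard1' (s := {e | G.src e = v}) h

lemma in2 (G : MultiDigraph) {v : G.W} (h : mInDeg G v = 2) :
    ∃ a b, a ≠ b ∧ G.tgt a = v ∧ G.tgt b = v ∧ ∀ e, G.tgt e = v → e = a ∨ e = b :=
  ncard2' (s := {e | G.tgt e = v}) h

lemma out2 (G : MultiDigraph) {v : G.W} (h : mOutDeg G v = 2) :
    ∃ a b, a ≠ b ∧ G.src a = v ∧ G.src b = v ∧ ∀ e, G.src e = v → e = a ∨ e = b :=
  ncard2' (s := {e | G.src e = v}) h

lemma inpair (G : MultiDigraph) {v : G.W} (h : mInDeg G v = 2) {a b : G.E}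
    (ha : G.tgt a = v) (hb : G.tgt b = v) (hab : a ≠ b) :
    ∀ e, G.tgt e = v → e = a ∨ e = b :=
  pair_char' (s := {e | G.tgt e = v}) h ha hb hab

lemma outpair (G : MultiDigraph) {v : G.W} (h : mOutDeg G v = 2) {a b : G.E}
    (ha : G.src a = v) (hb : G.src b = v) (hab : a ≠ b) :
    ∀ e, G.src e = v → e = a ∨ e = b :=
  pair_char' (s := {e | G.src e = v}) h ha hb hab

lemma nloop_of (G : MultiDigraph) (hac : ∀ v, ¬ Relation.TransGen (mAdj G) v v) :
    ∀ e : G.E, G.src e ≠ G.tgt e :=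
  fun e he => hac (G.tgt e) (Relation.TransGen.single ⟨e, he, rfl⟩)

lemma no2_of (G : MultiDigraph) (hac : ∀ v, ¬ Relation.TransGen (mAdj G) v v) :
    ∀ e e' : G.E, G.src e = G.tgt e' → G.src e' = G.tgt e → False :=
  fun e e' h1 h2 => hac (G.tgt e)
    (Relation.TransGen.tail (Relation.TransGen.single ⟨e', h2, rfl⟩) ⟨e, h1, rfl⟩)

/-! ### Degree computations for concrete graphs -/

instance mAdjDec (G : MultiDigraph) [DecidableEq G.W] [Fintype G.E] : DecidableRel (mAdj G) :=
  fun a b => by unfold mAdj; infer_instance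

lemma mInDeg_eq_card (G : MultiDigraph) [Fintype G.E] [DecidableEq G.W] (v : G.W) :
    mInDeg G v = (Finset.univ.filter fun e => G.tgt e = v).card := by
  rw [mInDeg, Set.ncard_eq_toFinset_card']; simp

lemma mOutDeg_eq_card (G : MultiDigraph) [Fintype G.E] [DecidableEq G.W] (v : G.W) :
    mOutDeg G v = (Finset.univ.filter fun e => G.src e = v).card := by
  rw [mOutDeg, Set.ncard_eq_toFinset_card']; simp

lemma card_sum_in (G : MultiDigraph) [Fintype G.W] [Fintype G.E] [DecidableEq G.W] :
    Fintype.card G.E = ∑ v : G.W, mInDeg G v := by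
  simp_rw [mInDeg_eq_card]
  rw [← Finset.card_univ]
  exact Finset.card_eq_sum_card_fiberwise (fun e _ => Finset.mem_univ (G.tgt e))

lemma card_sum_out (G : MultiDigraph) [Fintype G.W] [Fintype G.E] [DecidableEq G.W] :
    Fintype.card G.E = ∑ v : G.W, mOutDeg G v := by
  simp_rw [mOutDeg_eq_card]
  rw [← Finset.card_univ]
  exact Finset.card_eq_sum_card_fiberwise (fun e _ => Finset.mem_univ (G.src e))

/-! ### stepN : decidable reachability certificates -/

def stepN {α : Type*} (r : α → α → Prop) : ℕ → α → α → Prop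
  | 0, a, b => a = b
  | (k+1), a, b => ∃ c, (a = c ∨ r a c) ∧ stepN r k c b

instance stepNDec {α : Type*} (r : α → α → Prop) [DecidableEq α] [DecidableRel r] [Fintype α] :
    ∀ k, DecidableRel (stepN r k)
  | 0, _, _ => by unfold stepN; infer_instance
  | (k+1), a, b => by
      haveI := fun c => stepNDec r k c b
      unfold stepN; infer_instance

lemma stepN_rtg {α : Type*} {r : α → α → Prop} :
    ∀ {k : ℕ} {a b : α}, stepN r k a b → Relation.ReflTransGen r a b := by
  intro k
  induction k with
  | zero => intro a b h; exact h ▸ Relation.ReflTransGen.refl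
  | succ k ih =>
      rintro a b ⟨c, hc | hc, h⟩
      · exact hc ▸ ih h
      · exact Relation.ReflTransGen.head hc (ih h)

lemma rank_acyclic (G : MultiDigraph) (ρ : G.W → ℕ) (h : ∀ e, ρ (G.src e) < ρ (G.tgt e)) :
    ∀ v, ¬ Relation.TransGen (mAdj G) v v := by
  have key : ∀ a b, Relation.TransGen (mAdj G) a b → ρ a < ρ b := by
    intro a b hab
    induction hab with
    | single hs => obtain ⟨e, he1, he2⟩ := hs; exact he1 ▸ he2 ▸ h e
    | tail _ hs ih => obtain ⟨e, he1, he2⟩ := hs; exact ih.trans (he1 ▸ he2 ▸ h e)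
  exact fun v hv => lt_irrefl _ (key v v hv)

/-! ### The four concrete generators -/

@[reducible] def GenA : MultiDigraph := ⟨Fin 4, Fin 5, ![0,0,1,1,2], ![1,2,2,3,3]⟩
@[reducible] def GenB : MultiDigraph := ⟨Fin 5, Fin 6, ![0,0,1,1,2,2], ![1,4,2,3,3,4]⟩
@[reducible] def GenC : MultiDigraph := ⟨Fin 5, Fin 6, ![0,0,1,1,2,2], ![1,2,3,4,3,4]⟩
@[reducible] def GenD : MultiDigraph := ⟨Fin 4, Fin 5, ![0,0,1,1,2], ![1,3,2,2,3]⟩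

lemma inA : ∀ v, mInDeg GenA v = ![0,1,2,2] v := by
  intro v; rw [mInDeg_eq_card]; revert v; decide
lemma outA : ∀ v, mOutDeg GenA v = ![2,2,1,0] v := by
  intro v; rw [mOutDeg_eq_card]; revert v; decide
lemma inB : ∀ v, mInDeg GenB v = ![0,1,1,2,2] v := by
  intro v; rw [mInDeg_eq_card]; revert v; decide
lemma outB : ∀ v, mOutDeg GenB v = ![2,2,2,0,0] v := by
  intro v; rw [mOutDeg_eq_card]; revert v; decide
lemma inC : ∀ v, mInDeg GenC v = ![0,1,1,2,2] v := by
  intro v; rw [mInDeg_eq_card]; revert v; decide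
lemma outC : ∀ v, mOutDeg GenC v = ![2,2,2,0,0] v := by
  intro v; rw [mOutDeg_eq_card]; revert v; decide
lemma inD : ∀ v, mInDeg GenD v = ![0,1,2,2] v := by
  intro v; rw [mInDeg_eq_card]; revert v; decide
lemma outD : ∀ v, mOutDeg GenD v = ![2,2,1,0] v := by
  intro v; rw [mOutDeg_eq_card]; revert v; decide

lemma genA : IsGenerator 2 GenA := by
  refine ⟨inferInstance, inferInstance, rank_acyclic _ Fin.val (by decide), ?_, ?_, ?_, ?_, ?_⟩
  · intro a b; apply stepN_rtg (k := 4); revert a b; decide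
  · intro w a b ha hb; apply stepN_rtg (k := 4); revert ha hb; revert w a b; decide
  · exact ⟨0, inA 0, by intro y hy; rw [inA] at hy; revert hy; revert y; decide⟩
  · have h : {v | mInDeg GenA v = 2} = {2, 3} := by
      ext v; simp only [inA, Set.mem_setOf_eq, Set.mem_insert_iff, Set.mem_singleton_iff]
      revert v; decide
    rw [h, Set.ncard_pair (by decide)]
  · intro v; rw [inA, outA]; revert v; decide

lemma genB : IsGenerator 2 GenB := by
  refine ⟨inferInstance, inferInstance, rank_acyclic _ Fin.val (by decide), ?_, ?_, ?_, ?_, ?_⟩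
  · intro a b; apply stepN_rtg (k := 5); revert a b; decide
  · intro w a b ha hb; apply stepN_rtg (k := 5); revert ha hb; revert w a b; decide
  · exact ⟨0, inB 0, by intro y hy; rw [inB] at hy; revert hy; revert y; decide⟩
  · have h : {v | mInDeg GenB v = 2} = {3, 4} := by
      ext v; simp only [inB, Set.mem_setOf_eq, Set.mem_insert_iff, Set.mem_singleton_iff]
      revert v; decide
    rw [h, Set.ncard_pair (by decide)]
  · intro v; rw [inB, outB]; revert v; decide

lemma genC : IsGenerator 2 GenC := by
  refine ⟨inferInstance, inferInstance, rank_acyclic _ Fin.val (by decide), ?_, ?_, ?_, ?_, ?_⟩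
  · intro a b; apply stepN_rtg (k := 5); revert a b; decide
  · intro w a b ha hb; apply stepN_rtg (k := 5); revert ha hb; revert w a b; decide
  · exact ⟨0, inC 0, by intro y hy; rw [inC] at hy; revert hy; revert y; decide⟩
  · have h : {v | mInDeg GenC v = 2} = {3, 4} := by
      ext v; simp only [inC, Set.mem_setOf_eq, Set.mem_insert_iff, Set.mem_singleton_iff]
      revert v; decide
    rw [h, Set.ncard_pair (by decide)]
  · intro v; rw [inC, outC]; revert v; decide

lemma genD : IsGenerator 2 GenD := by
  refine ⟨inferInstance, inferInstance, rank_acyclic _ Fin.val (by decide), ?_, ?_, ?_, ?_, ?_⟩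
  · intro a b; apply stepN_rtg (k := 4); revert a b; decide
  · intro w a b ha hb; apply stepN_rtg (k := 4); revert ha hb; revert w a b; decide
  · exact ⟨0, inD 0, by intro y hy; rw [inD] at hy; revert hy; revert y; decide⟩
  · have h : {v | mInDeg GenD v = 2} = {2, 3} := by
      ext v; simp only [inD, Set.mem_setOf_eq, Set.mem_insert_iff, Set.mem_singleton_iff]
      revert v; decide
    rw [h, Set.ncard_pair (by decide)]
  · intro v; rw [inD, outD]; revert v; decide

/-! ### Isomorphism invariants -/

lemma MIso_symm {G H : MultiDigraph} (h : MIso G H) : MIso H G := by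
  obtain ⟨f, g, hf, hg, hs, ht⟩ := h
  refine ⟨(Equiv.ofBijective f hf).symm, (Equiv.ofBijective g hg).symm,
    (Equiv.ofBijective f hf).symm.bijective, (Equiv.ofBijective g hg).symm.bijective,
    fun e => ?_, fun e => ?_⟩
  · apply hf.injective
    rw [Equiv.ofBijective_apply_symm_apply f hf, ← hs, Equiv.ofBijective_apply_symm_apply g hg]
  · apply hf.injective
    rw [Equiv.ofBijective_apply_symm_apply f hf, ← ht, Equiv.ofBijective_apply_symm_apply g hg]

lemma MIso_cardW {G H : MultiDigraph} [Fintype G.W] [Fintype H.W] (h : MIso G H) :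
    Fintype.card G.W = Fintype.card H.W := by
  obtain ⟨f, _, hf, _⟩ := h; exact Fintype.card_of_bijective hf

def HasPar (G : MultiDigraph) : Prop :=
  ∃ e e', e ≠ e' ∧ G.src e = G.src e' ∧ G.tgt e = G.tgt e'

lemma MIso_haspar {G H : MultiDigraph} (h : MIso G H) (hp : HasPar H) : HasPar G := by
  obtain ⟨f, g, hf, hg, hs, ht⟩ := h
  obtain ⟨e, e', hne, h1, h2⟩ := hp
  obtain ⟨a, rfl⟩ := hg.2 e
  obtain ⟨b, rfl⟩ := hg.2 e'
  refine ⟨a, b, fun hab => hne (hab ▸ rfl), ?_, ?_⟩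
  · exact hf.injective (by rw [← hs, ← hs, h1])
  · exact hf.injective (by rw [← ht, ← ht, h2])

lemma MIso_inDeg {G H : MultiDigraph} (f : G.W → H.W) (g : G.E → H.E)
    (hf : Function.Bijective f) (hg : Function.Bijective g)
    (ht : ∀ e, H.tgt (g e) = f (G.tgt e)) (v : G.W) : mInDeg H (f v) = mInDeg G v := by
  have h : {e | H.tgt e = f v} = g '' {e | G.tgt e = v} := by
    ext e'
    constructor
    · intro he
      obtain ⟨a, rfl⟩ := hg.2 e'
      exact ⟨a, hf.injective (by rw [← ht]; exact he), rfl⟩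
    · rintro ⟨a, ha, rfl⟩; show H.tgt (g a) = f v; rw [ht]; exact congrArg f ha
  rw [mInDeg, h, Set.ncard_image_of_injective _ hg.injective, mInDeg]

def RootRec (G : MultiDigraph) : Prop :=
  ∃ e, mInDeg G (G.src e) = 0 ∧ mInDeg G (G.tgt e) = 2

lemma MIso_rootrec {G H : MultiDigraph} (h : MIso G H) (hp : RootRec G) : RootRec H := by
  obtain ⟨f, g, hf, hg, hs, ht⟩ := h
  obtain ⟨e, h1, h2⟩ := hp
  exact ⟨g e, by rw [hs, MIso_inDeg f g hf hg ht]; exact h1,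
    by rw [ht, MIso_inDeg f g hf hg ht]; exact h2⟩

lemma nAB : ¬ MIso GenA GenB := fun h => by have := MIso_cardW h; simp at this
lemma nAC : ¬ MIso GenA GenC := fun h => by have := MIso_cardW h; simp at this
lemma nBD : ¬ MIso GenB GenD := fun h => by have := MIso_cardW h; simp at this
lemma nCD : ¬ MIso GenC GenD := fun h => by have := MIso_cardW h; simp at this

lemma nAD : ¬ MIso GenA GenD := by
  intro h
  have hp : HasPar GenA := MIso_haspar h ⟨2, 3, by decide, by decide, by decide⟩
  obtain ⟨e, e', hne, h1, h2⟩ := hp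
  revert hne h1 h2; revert e e'; decide

lemma nBC : ¬ MIso GenB GenC := by
  intro h
  have hB : RootRec GenB := ⟨1, by rw [show GenB.src 1 = 0 from rfl, inB]; decide,
    by rw [show GenB.tgt 1 = 4 from rfl, inB]; decide⟩
  have hC := MIso_rootrec h hB
  obtain ⟨e, h1, h2⟩ := hC
  rw [inC] at h1 h2
  revert h1 h2; revert e; decide

end StmtEight
end Phylo

namespace Phylo
section Builds

lemma build_A (G : MultiDigraph) [Fintype G.W] [Fintype G.E]
    (r s r1 r2 : G.W) (e1 e2 g1 g2 f : G.E)
    (hcW : Fintype.card G.W = 4) (hcE : Fintype.card G.E = 5)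
    (hW : ∀ v, v = r ∨ v = s ∨ v = r1 ∨ v = r2)
    (hE : ∀ e, e = e1 ∨ e = e2 ∨ e = g1 ∨ e = g2 ∨ e = f)
    (h1s : G.src e1 = r) (h1t : G.tgt e1 = s)
    (h2s : G.src e2 = r) (h2t : G.tgt e2 = r1)
    (h3s : G.src g1 = s) (h3t : G.tgt g1 = r1)
    (h4s : G.src g2 = s) (h4t : G.tgt g2 = r2)
    (h5s : G.src f = r1) (h5t : G.tgt f = r2) :
    MIso G GenA := by
  apply MIso_symm
  refine ⟨![r, s, r1, r2], ![e1, e2, g1, g2, f], ?_, ?_, ?_, ?_⟩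
  · rw [Fintype.bijective_iff_surjective_and_card]
    refine ⟨fun v => ?_, by simp [hcW]⟩
    rcases hW v with rfl|rfl|rfl|rfl
    exacts [⟨0, rfl⟩, ⟨1, rfl⟩, ⟨2, rfl⟩, ⟨3, rfl⟩]
  · rw [Fintype.bijective_iff_surjective_and_card]
    refine ⟨fun e => ?_, by simp [hcE]⟩
    rcases hE e with rfl|rfl|rfl|rfl|rfl
    exacts [⟨0, rfl⟩, ⟨1, rfl⟩, ⟨2, rfl⟩, ⟨3, rfl⟩, ⟨4, rfl⟩]
  · intro e; fin_cases e
    exacts [h1s, h2s, h3s, h4s, h5s]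
  · intro e; fin_cases e
    exacts [h1t, h2t, h3t, h4t, h5t]

lemma build_D (G : MultiDigraph) [Fintype G.W] [Fintype G.E]
    (r s r1 r2 : G.W) (e1 e2 g1 g2 f : G.E)
    (hcW : Fintype.card G.W = 4) (hcE : Fintype.card G.E = 5)
    (hW : ∀ v, v = r ∨ v = s ∨ v = r1 ∨ v = r2)
    (hE : ∀ e, e = e1 ∨ e = e2 ∨ e = g1 ∨ e = g2 ∨ e = f)
    (h1s : G.src e1 = r) (h1t : G.tgt e1 = s)
    (h2s : G.src e2 = r) (h2t : G.tgt e2 = r2)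
    (h3s : G.src g1 = s) (h3t : G.tgt g1 = r1)
    (h4s : G.src g2 = s) (h4t : G.tgt g2 = r1)
    (h5s : G.src f = r1) (h5t : G.tgt f = r2) :
    MIso G GenD := by
  apply MIso_symm
  refine ⟨![r, s, r1, r2], ![e1, e2, g1, g2, f], ?_, ?_, ?_, ?_⟩
  · rw [Fintype.bijective_iff_surjective_and_card]
    refine ⟨fun v => ?_, by simp [hcW]⟩
    rcases hW v with rfl|rfl|rfl|rfl
    exacts [⟨0, rfl⟩, ⟨1, rfl⟩, ⟨2, rfl⟩, ⟨3, rfl⟩]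
  · rw [Fintype.bijective_iff_surjective_and_card]
    refine ⟨fun e => ?_, by simp [hcE]⟩
    rcases hE e with rfl|rfl|rfl|rfl|rfl
    exacts [⟨0, rfl⟩, ⟨1, rfl⟩, ⟨2, rfl⟩, ⟨3, rfl⟩, ⟨4, rfl⟩]
  · intro e; fin_cases e
    exacts [h1s, h2s, h3s, h4s, h5s]
  · intro e; fin_cases e
    exacts [h1t, h2t, h3t, h4t, h5t]

lemma build_B (G : MultiDigraph) [Fintype G.W] [Fintype G.E]
    (r s1 s2 r1 r2 : G.W) (e1 e2 g1 g2 h1 h2 : G.E)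
    (hcW : Fintype.card G.W = 5) (hcE : Fintype.card G.E = 6)
    (hW : ∀ v, v = r ∨ v = s1 ∨ v = s2 ∨ v = r1 ∨ v = r2)
    (hE : ∀ e, e = e1 ∨ e = e2 ∨ e = g1 ∨ e = g2 ∨ e = h1 ∨ e = h2)
    (h1s : G.src e1 = r) (h1t : G.tgt e1 = s1)
    (h2s : G.src e2 = r) (h2t : G.tgt e2 = r2)
    (h3s : G.src g1 = s1) (h3t : G.tgt g1 = s2)
    (h4s : G.src g2 = s1) (h4t : G.tgt g2 = r1)
    (h5s : G.src h1 = s2) (h5t : G.tgt h1 = r1)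
    (h6s : G.src h2 = s2) (h6t : G.tgt h2 = r2) :
    MIso G GenB := by
  apply MIso_symm
  refine ⟨![r, s1, s2, r1, r2], ![e1, e2, g1, g2, h1, h2], ?_, ?_, ?_, ?_⟩
  · rw [Fintype.bijective_iff_surjective_and_card]
    refine ⟨fun v => ?_, by simp [hcW]⟩
    rcases hW v with rfl|rfl|rfl|rfl|rfl
    exacts [⟨0, rfl⟩, ⟨1, rfl⟩, ⟨2, rfl⟩, ⟨3, rfl⟩, ⟨4, rfl⟩]
  · rw [Fintype.bijective_iff_surjective_and_card]
    refine ⟨fun e => ?_, by simp [hcE]⟩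
    rcases hE e with rfl|rfl|rfl|rfl|rfl|rfl
    exacts [⟨0, rfl⟩, ⟨1, rfl⟩, ⟨2, rfl⟩, ⟨3, rfl⟩, ⟨4, rfl⟩, ⟨5, rfl⟩]
  · intro e; fin_cases e
    exacts [h1s, h2s, h3s, h4s, h5s, h6s]
  · intro e; fin_cases e
    exacts [h1t, h2t, h3t, h4t, h5t, h6t]

lemma build_C (G : MultiDigraph) [Fintype G.W] [Fintype G.E]
    (r s1 s2 r1 r2 : G.W) (e1 e2 g1 g2 h1 h2 : G.E)
    (hcW : Fintype.card G.W = 5) (hcE : Fintype.card G.E = 6)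
    (hW : ∀ v, v = r ∨ v = s1 ∨ v = s2 ∨ v = r1 ∨ v = r2)
    (hE : ∀ e, e = e1 ∨ e = e2 ∨ e = g1 ∨ e = g2 ∨ e = h1 ∨ e = h2)
    (h1s : G.src e1 = r) (h1t : G.tgt e1 = s1)
    (h2s : G.src e2 = r) (h2t : G.tgt e2 = s2)
    (h3s : G.src g1 = s1) (h3t : G.tgt g1 = r1)
    (h4s : G.src g2 = s1) (h4t : G.tgt g2 = r2)
    (h5s : G.src h1 = s2) (h5t : G.tgt h1 = r1)
    (h6s : G.src h2 = s2) (h6t : G.tgt h2 = r2) :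
    MIso G GenC := by
  apply MIso_symm
  refine ⟨![r, s1, s2, r1, r2], ![e1, e2, g1, g2, h1, h2], ?_, ?_, ?_, ?_⟩
  · rw [Fintype.bijective_iff_surjective_and_card]
    refine ⟨fun v => ?_, by simp [hcW]⟩
    rcases hW v with rfl|rfl|rfl|rfl|rfl
    exacts [⟨0, rfl⟩, ⟨1, rfl⟩, ⟨2, rfl⟩, ⟨3, rfl⟩, ⟨4, rfl⟩]
  · rw [Fintype.bijective_iff_surjective_and_card]
    refine ⟨fun e => ?_, by simp [hcE]⟩
    rcases hE e with rfl|rfl|rfl|rfl|rfl|rfl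
    exacts [⟨0, rfl⟩, ⟨1, rfl⟩, ⟨2, rfl⟩, ⟨3, rfl⟩, ⟨4, rfl⟩, ⟨5, rfl⟩]
  · intro e; fin_cases e
    exacts [h1s, h2s, h3s, h4s, h5s, h6s]
  · intro e; fin_cases e
    exacts [h1t, h2t, h3t, h4t, h5t, h6t]

end Builds
end Phylo

namespace Phylo
section Cases

lemma case_m1 (G : MultiDigraph) [Fintype G.W] [Fintype G.E]
    (hac : ∀ v, ¬ Relation.TransGen (mAdj G) v v)
    (hbic : ∀ w a b : G.W, a ≠ w → b ≠ w →
      Relation.ReflTransGen (fun p q => p ≠ w ∧ q ≠ w ∧ (mAdj G p q ∨ mAdj G q p)) a b)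
    (r s ra rb : G.W)
    (hcW : Fintype.card G.W = 4) (hcE : Fintype.card G.E = 5)
    (hW : ∀ v, v = r ∨ v = s ∨ v = ra ∨ v = rb)
    (hsr : s ≠ r) (hsa : s ≠ ra) (hsb : s ≠ rb)
    (hra : r ≠ ra) (hrb : r ≠ rb) (hab : ra ≠ rb)
    (hr0 : mInDeg G r = 0) (hrout : mOutDeg G r = 2)
    (hsin : mInDeg G s = 1) (hsout : mOutDeg G s = 2)
    (haIn : mInDeg G ra = 2) (hbIn : mInDeg G rb = 2)
    (haOut : mOutDeg G ra = 1) (hbOut : mOutDeg G rb = 0) :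
    MIso G GenA ∨ MIso G GenD := by
  have hto_r := in0 G hr0
  have nloop := nloop_of G hac
  have no2 := no2_of G hac
  obtain ⟨f, hfs, hfuniq⟩ := out1 G haOut
  have hrbout := out0 G hbOut
  obtain ⟨es, hest, hesuniq⟩ := in1 G hsin
  have htf : G.tgt f = s ∨ G.tgt f = ra ∨ G.tgt f = rb := by
    rcases hW (G.tgt f) with h|h|h|h
    · exact absurd h (hto_r f)
    · exact Or.inl h
    · exact Or.inr (Or.inl h)
    · exact Or.inr (Or.inr h)
  rcases htf with htf|htf|htf
  · -- f targets s : biconnectivity fails at ra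
    exfalso
    -- every in-edge of ra comes from r
    have hraIn_src : ∀ e, G.tgt e = ra → G.src e = r := by
      intro e he
      rcases hW (G.src e) with h|h|h|h
      · exact h
      · exact (no2 e f (h.trans htf.symm) (hfs.trans he.symm)).elim
      · exact (nloop e (h.trans he.symm)).elim
      · exact (hrbout e h).elim
    obtain ⟨a1, a2, ha12, ha1, ha2, hachar⟩ := in2 G haIn
    have hsa1 : G.src a1 = r := hraIn_src a1 ha1
    have hsa2 : G.src a2 = r := hraIn_src a2 ha2
    have routchar := outpair G hrout hsa1 hsa2 ha12
    have hreach := hbic ra r s (by exact hra) (by exact hsa)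
    refine not_rtg (S := {r}) rfl (fun hh => hsr hh) ?_ hreach
    intro x hx y hy
    rw [Set.mem_singleton_iff] at hx
    subst hx
    obtain ⟨hxw, hyw, hadj⟩ := hy
    rcases hadj with ⟨e, hes', het'⟩|⟨e, hes', het'⟩
    · rcases routchar e hes' with rfl|rfl
      · exact (hyw (het'.symm.trans ha1)).elim
      · exact (hyw (het'.symm.trans ha2)).elim
    · exact (hto_r e het').elim
  · exact (nloop f (hfs.trans htf.symm)).elim
  · -- f targets rb : the main case
    have hessrc : G.src es = r := by
      rcases hW (G.src es) with h|h|h|h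
      · exact h
      · exact (nloop es (h.trans hest.symm)).elim
      · have heq := hfuniq es h
        rw [heq] at hest
        exact (hsb.symm (htf.symm.trans hest)).elim
      · exact (hrbout es h).elim
    obtain ⟨c1, c2, hc12, hc1, hc2, hcchar⟩ := out2 G hrout
    obtain ⟨e2, he2s, he2ne, hrchar⟩ :
        ∃ e2, G.src e2 = r ∧ e2 ≠ es ∧ ∀ e, G.src e = r → e = es ∨ e = e2 := by
      rcases hcchar es hessrc with rfl|rfl
      · exact ⟨c2, hc2, hc12.symm, fun e he => hcchar e he⟩
      · exact ⟨c1, hc1, hc12, fun e he => (hcchar e he).symm⟩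
    obtain ⟨g1, g2, hg12, hg1, hg2, hgchar⟩ := out2 G hsout
    have hfne : G.src f = ra := hfs
    -- distinctness of named edges by sources
    have hesg1 : es ≠ g1 := fun h => hsr (by rw [← hg1, ← h]; exact hessrc)
    have hesg2 : es ≠ g2 := fun h => hsr (by rw [← hg2, ← h]; exact hessrc)
    have he2g1 : e2 ≠ g1 := fun h => hsr (by rw [← hg1, ← h]; exact he2s)
    have he2g2 : e2 ≠ g2 := fun h => hsr (by rw [← hg2, ← h]; exact he2s)
    have hfg1 : g1 ≠ f := fun h => hsa (by rw [← hg1, h]; exact hfs)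
    have hfg2 : g2 ≠ f := fun h => hsa (by rw [← hg2, h]; exact hfs)
    have he2f : e2 ≠ f := fun h => hra (by rw [← he2s, h]; exact hfs)
    have hg1t : G.tgt g1 = ra ∨ G.tgt g1 = rb := by
      rcases hW (G.tgt g1) with h|h|h|h
      · exact (hto_r g1 h).elim
      · exact (hesg1 (hesuniq g1 h).symm).elim
      · exact Or.inl h
      · exact Or.inr h
    have hg2t : G.tgt g2 = ra ∨ G.tgt g2 = rb := by
      rcases hW (G.tgt g2) with h|h|h|h
      · exact (hto_r g2 h).elim
      · exact (hesg2 (hesuniq g2 h).symm).elim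
      · exact Or.inl h
      · exact Or.inr h
    have he2t : G.tgt e2 = ra ∨ G.tgt e2 = rb := by
      rcases hW (G.tgt e2) with h|h|h|h
      · exact (hto_r e2 h).elim
      · exact (he2ne (hesuniq e2 h)).elim
      · exact Or.inl h
      · exact Or.inr h
    rcases he2t with he2t|he2t
    · -- e2 targets ra : generator A
      by_cases hgt : G.tgt g1 = ra
      · have hg2rb : G.tgt g2 = rb := by
          rcases hg2t with h|h
          · rcases inpair G haIn he2t hgt (fun hh => he2g1 hh) g2 h with rfl|rfl
            · exact (he2g2 rfl).elim
            · exact (hg12 rfl).elim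
          · exact h
        exact Or.inl (build_A G r s ra rb es e2 g1 g2 f hcW hcE
          (fun v => hW v)
          (by
            intro e
            rcases hW (G.tgt e) with h|h|h|h
            · exact (hto_r e h).elim
            · exact Or.inl (hesuniq e h)
            · rcases inpair G haIn he2t hgt (fun hh => he2g1 hh) e h with rfl|rfl
              · exact Or.inr (Or.inl rfl)
              · exact Or.inr (Or.inr (Or.inl rfl))
            · rcases inpair G hbIn hg2rb htf hfg2 e h with rfl|rfl
              · exact Or.inr (Or.inr (Or.inr (Or.inl rfl)))
              · exact Or.inr (Or.inr (Or.inr (Or.inr rfl))))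
          hessrc hest he2s he2t hg1 hgt hg2 hg2rb hfs htf)
      · have hg1rb : G.tgt g1 = rb := hg1t.resolve_left hgt
        have hg2ra : G.tgt g2 = ra := by
          rcases hg2t with h|h
          · exact h
          · exact (pigeon3 (inpair G hbIn hg1rb htf hfg1 g2 h) (Or.inl rfl) (Or.inr rfl)
              (fun hh => hg12 hh.symm) (fun hh => hfg2 hh) (fun hh => hfg1 hh)).elim
        exact Or.inl (build_A G r s ra rb es e2 g2 g1 f hcW hcE
          (fun v => hW v)
          (by
            intro e
            rcases hW (G.tgt e) with h|h|h|h
            · exact (hto_r e h).elim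
            · exact Or.inl (hesuniq e h)
            · rcases inpair G haIn he2t hg2ra (fun hh => he2g2 hh) e h with rfl|rfl
              · exact Or.inr (Or.inl rfl)
              · exact Or.inr (Or.inr (Or.inl rfl))
            · rcases inpair G hbIn hg1rb htf hfg1 e h with rfl|rfl
              · exact Or.inr (Or.inr (Or.inr (Or.inl rfl)))
              · exact Or.inr (Or.inr (Or.inr (Or.inr rfl))))
          hessrc hest he2s he2t hg2 hg2ra hg1 hg1rb hfs htf)
    · -- e2 targets rb : generator D
      have hraIn_src : ∀ e, G.tgt e = ra → G.src e = s := by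
        intro e he
        rcases hW (G.src e) with h|h|h|h
        · rcases hrchar e h with rfl|rfl
          · exact (hsa (hest.symm.trans he)).elim
          · exact (hab (he.symm.trans he2t)).elim
        · exact h
        · exact (nloop e (h.trans he.symm)).elim
        · exact (hrbout e h).elim
      obtain ⟨a1, a2, ha12, ha1, ha2, hachar⟩ := in2 G haIn
      have hsa1 : G.src a1 = s := hraIn_src a1 ha1
      have hsa2 : G.src a2 = s := hraIn_src a2 ha2
      have hgboth : G.tgt g1 = ra ∧ G.tgt g2 = ra := by
        rcases hgchar a1 hsa1 with rfl|rfl <;> rcases hgchar a2 hsa2 with rfl|rfl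
        · exact (ha12 rfl).elim
        · exact ⟨ha1, ha2⟩
        · exact ⟨ha2, ha1⟩
        · exact (ha12 rfl).elim
      exact Or.inr (build_D G r s ra rb es e2 g1 g2 f hcW hcE
        (fun v => hW v)
        (by
          intro e
          rcases hW (G.tgt e) with h|h|h|h
          · exact (hto_r e h).elim
          · exact Or.inl (hesuniq e h)
          · rcases inpair G haIn hgboth.1 hgboth.2 hg12 e h with rfl|rfl
            · exact Or.inr (Or.inr (Or.inl rfl))
            · exact Or.inr (Or.inr (Or.inr (Or.inl rfl)))
          · rcases inpair G hbIn he2t htf he2f e h with rfl|rfl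
            · exact Or.inr (Or.inl rfl)
            · exact Or.inr (Or.inr (Or.inr (Or.inr rfl))))
        hessrc hest he2s he2t hg1 hgboth.1 hg2 hgboth.2 hfs htf)
  
end Cases
end Phylo

namespace Phylo
section CasesM2

lemma m2a_contra (G : MultiDigraph) [Fintype G.W] [Fintype G.E]
    (hbic : ∀ w a b : G.W, a ≠ w → b ≠ w →
      Relation.ReflTransGen (fun p q => p ≠ w ∧ q ≠ w ∧ (mAdj G p q ∨ mAdj G q p)) a b)
    (r sA sB q : G.W) (gA gB : G.E)
    (hsAr : sA ≠ r) (hsBr : sB ≠ r) (hsBA : sB ≠ sA) (hsBq : sB ≠ q)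
    (houtq : ∀ e, G.src e ≠ q) (hinq : mInDeg G q = 2)
    (hgAB : gA ≠ gB) (hgAs : G.src gA = sA) (hgAt : G.tgt gA = q)
    (hgBs : G.src gB = sA) (hgBt : G.tgt gB = q)
    (houtchar : ∀ e, G.src e = sA → e = gA ∨ e = gB)
    (hinsA : ∀ e, G.tgt e = sA → G.src e = r) : False := by
  have hreach := hbic r sA sB hsAr hsBr
  refine not_rtg (S := {sA, q}) (Or.inl rfl) ?_ ?_ hreach
  · intro hh
    rcases hh with hh|hh
    · exact hsBA hh
    · exact hsBq hh
  · intro x hx y hy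
    obtain ⟨hxw, hyw, hadj⟩ := hy
    rcases hx with hx|hx
    · subst hx
      rcases hadj with ⟨e, hes, het⟩|⟨e, hes, het⟩
      · rcases houtchar e hes with rfl|rfl
        · exact Or.inr (het.symm.trans hgAt)
        · exact Or.inr (het.symm.trans hgBt)
      · exact (hyw (hes.symm.trans (hinsA e het))).elim
    · rw [Set.mem_singleton_iff] at hx
      subst hx
      rcases hadj with ⟨e, hes, het⟩|⟨e, hes, het⟩
      · exact (houtq e hes).elim
      · rcases inpair G hinq hgAt hgBt hgAB e het with rfl|rfl
        · exact Or.inl (hes.symm.trans hgAs)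
        · exact Or.inl (hes.symm.trans hgBs)

lemma case_m2b' (G : MultiDigraph) [Fintype G.W] [Fintype G.E]
    (hbic : ∀ w a b : G.W, a ≠ w → b ≠ w →
      Relation.ReflTransGen (fun p q => p ≠ w ∧ q ≠ w ∧ (mAdj G p q ∨ mAdj G q p)) a b)
    (r sA sB ρ1 ρ2 : G.W) (e1 e2 gA : G.E)
    (hcW : Fintype.card G.W = 5) (hcE : Fintype.card G.E = 6)
    (hW : ∀ v, v = r ∨ v = sA ∨ v = sB ∨ v = ρ1 ∨ v = ρ2)
    (hsAr : sA ≠ r) (hsBr : sB ≠ r) (hsAB : sA ≠ sB)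
    (hρ1r : ρ1 ≠ r) (hρ1sB : ρ1 ≠ sB)
    (hto_r : ∀ e, G.tgt e ≠ r)
    (hsAout : mOutDeg G sA = 2) (hsBout : mOutDeg G sB = 2)
    (hρ1in : mInDeg G ρ1 = 2) (hρ2in : mInDeg G ρ2 = 2)
    (hρ1out : ∀ e, G.src e ≠ ρ1) (hρ2out : ∀ e, G.src e ≠ ρ2)
    (he1s : G.src e1 = r) (he1t : G.tgt e1 = sA)
    (hsAchar_in : ∀ e, G.tgt e = sA → e = e1)
    (he2s : G.src e2 = r) (he2t : G.tgt e2 = ρ2)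
    (hgAs : G.src gA = sA) (hgAt : G.tgt gA = sB)
    (hsBchar_in : ∀ e, G.tgt e = sB → e = gA) :
    MIso G GenB := by
  obtain ⟨c1, c2, hc12, hc1, hc2, hcchar⟩ := out2 G hsAout
  obtain ⟨gB, hgBs, hgBgA, hsAchar_out⟩ :
      ∃ gB, G.src gB = sA ∧ gB ≠ gA ∧ ∀ e, G.src e = sA → e = gA ∨ e = gB := by
    rcases hcchar gA hgAs with rfl|rfl
    · exact ⟨c2, hc2, hc12.symm, fun e he => hcchar e he⟩
    · exact ⟨c1, hc1, hc12, fun e he => (hcchar e he).symm⟩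
  obtain ⟨h1, h2, hh12, hh1, hh2, hhchar⟩ := out2 G hsBout
  -- basic distinctness via sources
  have he2gB : e2 ≠ gB := fun h => hsAr (by rw [← hgBs, ← h]; exact he2s)
  have he2h1 : e2 ≠ h1 := fun h => hsBr (by rw [← hh1, ← h]; exact he2s)
  have he2h2 : e2 ≠ h2 := fun h => hsBr (by rw [← hh2, ← h]; exact he2s)
  have hgBh1 : gB ≠ h1 := fun h => hsAB (by rw [← hgBs, h]; exact hh1)
  have hgBh2 : gB ≠ h2 := fun h => hsAB (by rw [← hgBs, h]; exact hh2)
  have htgB : G.tgt gB = ρ1 ∨ G.tgt gB = ρ2 := by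
    rcases hW (G.tgt gB) with h|h|h|h|h
    · exact (hto_r gB h).elim
    · exact (hsAr (by rw [← hgBs, hsAchar_in gB h]; exact he1s)).elim
    · exact (hgBgA (hsBchar_in gB h)).elim
    · exact Or.inl h
    · exact Or.inr h
  have hth1 : G.tgt h1 = ρ1 ∨ G.tgt h1 = ρ2 := by
    rcases hW (G.tgt h1) with h|h|h|h|h
    · exact (hto_r h1 h).elim
    · exact (hsBr (by rw [← hh1, hsAchar_in h1 h]; exact he1s)).elim
    · exact (hsAB (by rw [← hgAs, ← hsBchar_in h1 h]; exact hh1)).elim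
    · exact Or.inl h
    · exact Or.inr h
  have hth2 : G.tgt h2 = ρ1 ∨ G.tgt h2 = ρ2 := by
    rcases hW (G.tgt h2) with h|h|h|h|h
    · exact (hto_r h2 h).elim
    · exact (hsBr (by rw [← hh2, hsAchar_in h2 h]; exact he1s)).elim
    · exact (hsAB (by rw [← hgAs, ← hsBchar_in h2 h]; exact hh2)).elim
    · exact Or.inl h
    · exact Or.inr h
  rcases htgB with htgB|htgB
  · -- gB targets ρ1 : generator B
    rcases hth1 with hth1|hth1
    · have hth2' : G.tgt h2 = ρ2 := by
        rcases hth2 with h|h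
        · rcases inpair G hρ1in htgB hth1 hgBh1 h2 h with rfl|rfl
          · exact (hgBh2 rfl).elim
          · exact (hh12 rfl).elim
        · exact h
      refine build_B G r sA sB ρ1 ρ2 e1 e2 gA gB h1 h2 hcW hcE hW ?_ he1s he1t he2s he2t
        hgAs hgAt hgBs htgB hh1 hth1 hh2 hth2'
      intro e
      rcases hW (G.tgt e) with h|h|h|h|h
      · exact (hto_r e h).elim
      · exact Or.inl (hsAchar_in e h)
      · exact Or.inr (Or.inr (Or.inl (hsBchar_in e h)))
      · rcases inpair G hρ1in htgB hth1 hgBh1 e h with rfl|rfl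
        · exact Or.inr (Or.inr (Or.inr (Or.inl rfl)))
        · exact Or.inr (Or.inr (Or.inr (Or.inr (Or.inl rfl))))
      · rcases inpair G hρ2in he2t hth2' he2h2 e h with rfl|rfl
        · exact Or.inr (Or.inl rfl)
        · exact Or.inr (Or.inr (Or.inr (Or.inr (Or.inr rfl))))
    · have hth2' : G.tgt h2 = ρ1 := by
        rcases hth2 with h|h
        · exact h
        · rcases inpair G hρ2in he2t hth1 he2h1 h2 h with rfl|rfl
          · exact (he2h2 rfl).elim
          · exact (hh12 rfl).elim
      refine build_B G r sA sB ρ1 ρ2 e1 e2 gA gB h2 h1 hcW hcE hW ?_ he1s he1t he2s he2t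
        hgAs hgAt hgBs htgB hh2 hth2' hh1 hth1
      intro e
      rcases hW (G.tgt e) with h|h|h|h|h
      · exact (hto_r e h).elim
      · exact Or.inl (hsAchar_in e h)
      · exact Or.inr (Or.inr (Or.inl (hsBchar_in e h)))
      · rcases inpair G hρ1in htgB hth2' hgBh2 e h with rfl|rfl
        · exact Or.inr (Or.inr (Or.inr (Or.inl rfl)))
        · exact Or.inr (Or.inr (Or.inr (Or.inr (Or.inl rfl))))
      · rcases inpair G hρ2in he2t hth1 he2h1 e h with rfl|rfl
        · exact Or.inr (Or.inl rfl)
        · exact Or.inr (Or.inr (Or.inr (Or.inr (Or.inr rfl))))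
  · -- gB targets ρ2 : ρ1 gets isolated, contradiction
    exfalso
    have hth1' : G.tgt h1 = ρ1 := by
      rcases hth1 with h|h
      · exact h
      · rcases inpair G hρ2in he2t htgB he2gB h1 h with rfl|rfl
        · exact (he2h1 rfl).elim
        · exact (hgBh1 rfl).elim
    have hth2' : G.tgt h2 = ρ1 := by
      rcases hth2 with h|h
      · exact h
      · rcases inpair G hρ2in he2t htgB he2gB h2 h with rfl|rfl
        · exact (he2h2 rfl).elim
        · exact (hgBh2 rfl).elim
    have hreach := hbic sB ρ1 r hρ1sB (fun hh => hsBr hh.symm)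
    refine not_rtg (S := {ρ1}) rfl (fun hh => hρ1r (Set.mem_singleton_iff.mp hh).symm) ?_ hreach
    intro x hx y hy
    rw [Set.mem_singleton_iff] at hx
    subst hx
    obtain ⟨hxw, hyw, hadj⟩ := hy
    rcases hadj with ⟨e, hes, het⟩|⟨e, hes, het⟩
    · exact (hρ1out e hes).elim
    · rcases inpair G hρ1in hth1' hth2' hh12 e het with rfl|rfl
      · exact (hyw (hes.symm.trans hh1)).elim
      · exact (hyw (hes.symm.trans hh2)).elim

end CasesM2
end Phylo

namespace Phylo
section CasesM2A

lemma case_m2a' (G : MultiDigraph) [Fintype G.W] [Fintype G.E]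
    (r s1 s2 q1 q2 : G.W) (e1 e2 g1 g2 h1 h2 : G.E)
    (hcW : Fintype.card G.W = 5) (hcE : Fintype.card G.E = 6)
    (hW : ∀ v, v = r ∨ v = s1 ∨ v = s2 ∨ v = q1 ∨ v = q2)
    (hs12 : s1 ≠ s2)
    (hto_r : ∀ e, G.tgt e ≠ r)
    (hq1in : mInDeg G q1 = 2) (hq2in : mInDeg G q2 = 2)
    (he1s : G.src e1 = r) (he1t : G.tgt e1 = s1)
    (hs1char_in : ∀ e, G.tgt e = s1 → e = e1)
    (he2s : G.src e2 = r) (he2t : G.tgt e2 = s2)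
    (hs2char_in : ∀ e, G.tgt e = s2 → e = e2)
    (hg1 : G.src g1 = s1) (htg1 : G.tgt g1 = q1)
    (hg2 : G.src g2 = s1) (htg2 : G.tgt g2 = q2)
    (hh1 : G.src h1 = s2) (hh2 : G.src h2 = s2) (hh12 : h1 ≠ h2)
    (hth1 : G.tgt h1 = q1 ∨ G.tgt h1 = q2)
    (hth2 : G.tgt h2 = q1 ∨ G.tgt h2 = q2)
    (hqh : G.tgt h1 ≠ G.tgt h2) :
    MIso G GenC := by
  have hg1h1 : g1 ≠ h1 := fun h => hs12 (by rw [← hg1, h]; exact hh1)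
  have hg1h2 : g1 ≠ h2 := fun h => hs12 (by rw [← hg1, h]; exact hh2)
  have hg2h1 : g2 ≠ h1 := fun h => hs12 (by rw [← hg2, h]; exact hh1)
  have hg2h2 : g2 ≠ h2 := fun h => hs12 (by rw [← hg2, h]; exact hh2)
  rcases hth1 with hth1|hth1
  · have hth2' : G.tgt h2 = q2 := by
      rcases hth2 with h|h
      · exact (hqh (hth1.trans h.symm)).elim
      · exact h
    refine build_C G r s1 s2 q1 q2 e1 e2 g1 g2 h1 h2 hcW hcE hW ?_ he1s he1t he2s he2t
      hg1 htg1 hg2 htg2 hh1 hth1 hh2 hth2'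
    intro e
    rcases hW (G.tgt e) with h|h|h|h|h
    · exact (hto_r e h).elim
    · exact Or.inl (hs1char_in e h)
    · exact Or.inr (Or.inl (hs2char_in e h))
    · rcases inpair G hq1in htg1 hth1 hg1h1 e h with rfl|rfl
      · exact Or.inr (Or.inr (Or.inl rfl))
      · exact Or.inr (Or.inr (Or.inr (Or.inr (Or.inl rfl))))
    · rcases inpair G hq2in htg2 hth2' hg2h2 e h with rfl|rfl
      · exact Or.inr (Or.inr (Or.inr (Or.inl rfl)))
      · exact Or.inr (Or.inr (Or.inr (Or.inr (Or.inr rfl))))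
  · have hth2' : G.tgt h2 = q1 := by
      rcases hth2 with h|h
      · exact h
      · exact (hqh (hth1.trans h.symm)).elim
    refine build_C G r s1 s2 q1 q2 e1 e2 g1 g2 h2 h1 hcW hcE hW ?_ he1s he1t he2s he2t
      hg1 htg1 hg2 htg2 hh2 hth2' hh1 hth1
    intro e
    rcases hW (G.tgt e) with h|h|h|h|h
    · exact (hto_r e h).elim
    · exact Or.inl (hs1char_in e h)
    · exact Or.inr (Or.inl (hs2char_in e h))
    · rcases inpair G hq1in htg1 hth2' hg1h2 e h with rfl|rfl
      · exact Or.inr (Or.inr (Or.inl rfl))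
      · exact Or.inr (Or.inr (Or.inr (Or.inr (Or.inl rfl))))
    · rcases inpair G hq2in htg2 hth1 hg2h1 e h with rfl|rfl
      · exact Or.inr (Or.inr (Or.inr (Or.inl rfl)))
      · exact Or.inr (Or.inr (Or.inr (Or.inr (Or.inr rfl))))

lemma case_m2a (G : MultiDigraph) [Fintype G.W] [Fintype G.E]
    (hbic : ∀ w a b : G.W, a ≠ w → b ≠ w →
      Relation.ReflTransGen (fun p q => p ≠ w ∧ q ≠ w ∧ (mAdj G p q ∨ mAdj G q p)) a b)
    (r s1 s2 r1 r2 : G.W) (e1 e2 : G.E)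
    (hcW : Fintype.card G.W = 5) (hcE : Fintype.card G.E = 6)
    (hW : ∀ v, v = r ∨ v = s1 ∨ v = s2 ∨ v = r1 ∨ v = r2)
    (hs1r : s1 ≠ r) (hs2r : s2 ≠ r) (hs12 : s1 ≠ s2) (h12 : r1 ≠ r2)
    (hr1s1 : r1 ≠ s1) (hr1s2 : r1 ≠ s2) (hr2s1 : r2 ≠ s1) (hr2s2 : r2 ≠ s2)
    (hto_r : ∀ e, G.tgt e ≠ r)
    (hs1out : mOutDeg G s1 = 2) (hs2out : mOutDeg G s2 = 2)
    (hr1in : mInDeg G r1 = 2) (hr2in : mInDeg G r2 = 2)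
    (hr1out0 : ∀ e, G.src e ≠ r1) (hr2out0 : ∀ e, G.src e ≠ r2)
    (he1s : G.src e1 = r) (he1t : G.tgt e1 = s1)
    (hs1char_in : ∀ e, G.tgt e = s1 → e = e1)
    (he2s : G.src e2 = r) (he2t : G.tgt e2 = s2)
    (hs2char_in : ∀ e, G.tgt e = s2 → e = e2) :
    MIso G GenC := by
  obtain ⟨g1, g2, hg12, hg1, hg2, hgchar⟩ := out2 G hs1out
  obtain ⟨h1, h2, hh12, hh1, hh2, hhchar⟩ := out2 G hs2out
  have hins1 : ∀ e, G.tgt e = s1 → G.src e = r := fun e he => by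
    rw [hs1char_in e he]; exact he1s
  have hins2 : ∀ e, G.tgt e = s2 → G.src e = r := fun e he => by
    rw [hs2char_in e he]; exact he2s
  have htg : ∀ g, G.src g = s1 → G.tgt g = r1 ∨ G.tgt g = r2 := by
    intro g hgs
    rcases hW (G.tgt g) with h|h|h|h|h
    · exact (hto_r g h).elim
    · exact (hs1r (by rw [← hgs, hs1char_in g h]; exact he1s)).elim
    · exact (hs1r (by rw [← hgs, hs2char_in g h]; exact he2s)).elim
    · exact Or.inl h
    · exact Or.inr h
  have hth : ∀ h', G.src h' = s2 → G.tgt h' = r1 ∨ G.tgt h' = r2 := by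
    intro h' hhs
    rcases hW (G.tgt h') with h|h|h|h|h
    · exact (hto_r h' h).elim
    · exact (hs2r (by rw [← hhs, hs1char_in h' h]; exact he1s)).elim
    · exact (hs2r (by rw [← hhs, hs2char_in h' h]; exact he2s)).elim
    · exact Or.inl h
    · exact Or.inr h
  by_cases hqg : G.tgt g1 = G.tgt g2
  · exfalso
    rcases htg g1 hg1 with h|h
    · exact m2a_contra G hbic r s1 s2 r1 g1 g2 hs1r hs2r hs12.symm (fun hh => hr1s2 hh.symm)
        hr1out0 hr1in hg12 hg1 h hg2 (hqg.symm.trans h) hgchar hins1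
    · exact m2a_contra G hbic r s1 s2 r2 g1 g2 hs1r hs2r hs12.symm (fun hh => hr2s2 hh.symm)
        hr2out0 hr2in hg12 hg1 h hg2 (hqg.symm.trans h) hgchar hins1
  · by_cases hqh : G.tgt h1 = G.tgt h2
    · exfalso
      rcases hth h1 hh1 with h|h
      · exact m2a_contra G hbic r s2 s1 r1 h1 h2 hs2r hs1r hs12 (fun hh => hr1s1 hh.symm)
          hr1out0 hr1in hh12 hh1 h hh2 (hqh.symm.trans h) hhchar hins2
      · exact m2a_contra G hbic r s2 s1 r2 h1 h2 hs2r hs1r hs12 (fun hh => hr2s1 hh.symm)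
          hr2out0 hr2in hh12 hh1 h hh2 (hqh.symm.trans h) hhchar hins2
    · rcases htg g1 hg1 with hq1|hq1
      · have hq2 : G.tgt g2 = r2 := by
          rcases htg g2 hg2 with h|h
          · exact (hqg (hq1.trans h.symm)).elim
          · exact h
        exact case_m2a' G r s1 s2 r1 r2 e1 e2 g1 g2 h1 h2 hcW hcE hW hs12 hto_r hr1in hr2in
          he1s he1t hs1char_in he2s he2t hs2char_in hg1 hq1 hg2 hq2 hh1 hh2 hh12
          (hth h1 hh1) (hth h2 hh2) hqh
      · have hq2 : G.tgt g2 = r1 := by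
          rcases htg g2 hg2 with h|h
          · exact h
          · exact (hqg (hq1.trans h.symm)).elim
        have hW' : ∀ v, v = r ∨ v = s1 ∨ v = s2 ∨ v = r2 ∨ v = r1 := by
          intro v; rcases hW v with h|h|h|h|h <;> tauto
        exact case_m2a' G r s1 s2 r2 r1 e1 e2 g1 g2 h1 h2 hcW hcE hW' hs12 hto_r hr2in hr1in
          he1s he1t hs1char_in he2s he2t hs2char_in hg1 hq1 hg2 hq2 hh1 hh2 hh12
          ((hth h1 hh1).symm) ((hth h2 hh2).symm) hqh

end CasesM2A
end Phylo

namespace Phylo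
section Classify

lemma case_m2b (G : MultiDigraph) [Fintype G.W] [Fintype G.E]
    (hbic : ∀ w a b : G.W, a ≠ w → b ≠ w →
      Relation.ReflTransGen (fun p q => p ≠ w ∧ q ≠ w ∧ (mAdj G p q ∨ mAdj G q p)) a b)
    (r sA sB ra rb : G.W) (e1 gA : G.E)
    (hcW : Fintype.card G.W = 5) (hcE : Fintype.card G.E = 6)
    (hW : ∀ v, v = r ∨ v = sA ∨ v = sB ∨ v = ra ∨ v = rb)
    (hsAr : sA ≠ r) (hsBr : sB ≠ r) (hsAB : sA ≠ sB)
    (hab : ra ≠ rb) (har : ra ≠ r) (hbr : rb ≠ r)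
    (hasA : ra ≠ sA) (hasB : ra ≠ sB) (hbsA : rb ≠ sA) (hbsB : rb ≠ sB)
    (hto_r : ∀ e, G.tgt e ≠ r)
    (hrout : mOutDeg G r = 2)
    (hsAout : mOutDeg G sA = 2) (hsBout : mOutDeg G sB = 2)
    (hain : mInDeg G ra = 2) (hbin : mInDeg G rb = 2)
    (haout0 : ∀ e, G.src e ≠ ra) (hbout0 : ∀ e, G.src e ≠ rb)
    (he1s : G.src e1 = r) (he1t : G.tgt e1 = sA)
    (hsAchar_in : ∀ e, G.tgt e = sA → e = e1)
    (hgAs : G.src gA = sA) (hgAt : G.tgt gA = sB)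
    (hsBchar_in : ∀ e, G.tgt e = sB → e = gA) :
    MIso G GenB := by
  obtain ⟨c1, c2, hc12, hc1, hc2, hcchar⟩ := out2 G hrout
  obtain ⟨e2, he2s, he2ne, hrchar⟩ :
      ∃ e2, G.src e2 = r ∧ e2 ≠ e1 ∧ ∀ e, G.src e = r → e = e1 ∨ e = e2 := by
    rcases hcchar e1 he1s with rfl|rfl
    · exact ⟨c2, hc2, hc12.symm, fun e he => hcchar e he⟩
    · exact ⟨c1, hc1, hc12, fun e he => (hcchar e he).symm⟩
  have he2t : G.tgt e2 = ra ∨ G.tgt e2 = rb := by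
    rcases hW (G.tgt e2) with h|h|h|h|h
    · exact (hto_r e2 h).elim
    · exact (he2ne (hsAchar_in e2 h)).elim
    · exact (hsAr (by rw [← hgAs, ← hsBchar_in e2 h]; exact he2s)).elim
    · exact Or.inl h
    · exact Or.inr h
  rcases he2t with he2t|he2t
  · -- e2 targets ra, so ρ2 = ra, ρ1 = rb
    have hW' : ∀ v, v = r ∨ v = sA ∨ v = sB ∨ v = rb ∨ v = ra := by
      intro v; rcases hW v with h|h|h|h|h <;> tauto
    exact case_m2b' G hbic r sA sB rb ra e1 e2 gA hcW hcE hW' hsAr hsBr hsAB hbr hbsB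
      hto_r hsAout hsBout hbin hain hbout0 haout0 he1s he1t hsAchar_in he2s he2t
      hgAs hgAt hsBchar_in
  · exact case_m2b' G hbic r sA sB ra rb e1 e2 gA hcW hcE hW hsAr hsBr hsAB har hasB
      hto_r hsAout hsBout hain hbin haout0 hbout0 he1s he1t hsAchar_in he2s he2t
      hgAs hgAt hsBchar_in

set_option maxHeartbeats 2000000 in
lemma classify (G : MultiDigraph) (hG : IsGenerator 2 G) :
    MIso G GenA ∨ MIso G GenB ∨ MIso G GenC ∨ MIso G GenD := by
  classical
  obtain ⟨hWfin, hEfin, hac, hconn, hbic, hroot, hrec, hdeg⟩ := hG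
  haveI := hWfin
  haveI := hEfin
  haveI : Fintype G.W := Fintype.ofFinite _
  haveI : Fintype G.E := Fintype.ofFinite _
  obtain ⟨r, hr0, hruniq⟩ := hroot
  obtain ⟨r1, r2, h12, hrecset⟩ := Set.ncard_eq_two.mp hrec
  have hr1 : mInDeg G r1 = 2 := by
    have h : r1 ∈ {v | mInDeg G v = 2} := by rw [hrecset]; exact Or.inl rfl
    exact h
  have hr2 : mInDeg G r2 = 2 := by
    have h : r2 ∈ {v | mInDeg G v = 2} := by rw [hrecset]; exact Or.inr rfl
    exact h
  have hrec_mem : ∀ v, mInDeg G v = 2 → v = r1 ∨ v = r2 := by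
    intro v hv
    have h : v ∈ {v | mInDeg G v = 2} := hv
    rw [hrecset] at h
    exact h
  have hrr1 : r ≠ r1 := fun h => by rw [← h, hr0] at hr1; exact absurd hr1 (by norm_num)
  have hrr2 : r ≠ r2 := fun h => by rw [← h, hr0] at hr2; exact absurd hr2 (by norm_num)
  have hrout : mOutDeg G r = 2 := by
    rcases hdeg r with ⟨_, h⟩|⟨h, _⟩|⟨h, _⟩
    · exact h
    · exact absurd (hr0.symm.trans h) (by norm_num)
    · exact absurd (hr0.symm.trans h) (by norm_num)
  have ho1 : mOutDeg G r1 ≤ 1 := by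
    rcases hdeg r1 with ⟨h, _⟩|⟨_, h⟩|⟨h, _⟩
    · exact absurd (h.symm.trans hr1) (by norm_num)
    · exact h
    · exact absurd (h.symm.trans hr1) (by norm_num)
  have ho2 : mOutDeg G r2 ≤ 1 := by
    rcases hdeg r2 with ⟨h, _⟩|⟨_, h⟩|⟨h, _⟩
    · exact absurd (h.symm.trans hr2) (by norm_num)
    · exact h
    · exact absurd (h.symm.trans hr2) (by norm_num)
  have hsplit : ∀ v, v ≠ r → v ≠ r1 → v ≠ r2 → mInDeg G v = 1 ∧ mOutDeg G v = 2 := by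
    intro v hv hv1 hv2
    rcases hdeg v with ⟨h, h'⟩|⟨h, h'⟩|⟨h, h'⟩
    · exact absurd (hruniq v h) hv
    · rcases hrec_mem v h with rfl|rfl
      · exact absurd rfl hv1
      · exact absurd rfl hv2
    · exact ⟨h, h'⟩
  set T : Finset G.W := {r, r1, r2} with hT
  have hrT : r ∉ ({r1, r2} : Finset G.W) := by simp [hrr1, hrr2]
  have hr12' : r1 ∉ ({r2} : Finset G.W) := by simp [h12]
  have hcardT : T.card = 3 := by
    rw [hT, Finset.card_insert_of_notMem hrT, Finset.card_insert_of_notMem hr12',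
      Finset.card_singleton]
  have hmemT : ∀ v, v ∈ T ↔ (v = r ∨ v = r1 ∨ v = r2) := by intro v; simp [hT]
  set m := (Finset.univ \ T).card with hm
  have hcardW : Fintype.card G.W = m + 3 := by
    rw [← Finset.card_univ, ← Finset.card_sdiff_add_card_eq_card (Finset.subset_univ T), hcardT]
  have hsdiff_mem : ∀ v ∈ Finset.univ \ T, mInDeg G v = 1 ∧ mOutDeg G v = 2 := by
    intro v hv
    rw [Finset.mem_sdiff] at hv
    have h := hv.2
    rw [hmemT] at h
    push_neg at h
    exact hsplit v h.1 h.2.1 h.2.2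
  have h1in : ∑ v ∈ T, mInDeg G v = 4 := by
    rw [hT, Finset.sum_insert hrT, Finset.sum_insert hr12', Finset.sum_singleton, hr0, hr1, hr2]
    omega
  have h2in : ∑ v ∈ Finset.univ \ T, mInDeg G v = m := by
    rw [hm, Finset.card_eq_sum_ones]
    exact Finset.sum_congr rfl (fun v hv => (hsdiff_mem v hv).1)
  have hinsum : Fintype.card G.E = m + 4 := by
    have h0 := card_sum_in G
    rw [← Finset.sum_sdiff (Finset.subset_univ T), h1in, h2in] at h0
    omega
  have h1out : ∑ v ∈ T, mOutDeg G v = 2 + mOutDeg G r1 + mOutDeg G r2 := by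
    rw [hT, Finset.sum_insert hrT, Finset.sum_insert hr12', Finset.sum_singleton, hrout]
    omega
  have h2out : ∑ v ∈ Finset.univ \ T, mOutDeg G v = 2 * m := by
    rw [Finset.sum_congr rfl (fun v hv => (hsdiff_mem v hv).2), Finset.sum_const,
      smul_eq_mul, hm]
    ring
  have houtsum : Fintype.card G.E = 2 * m + 2 + mOutDeg G r1 + mOutDeg G r2 := by
    have h0 := card_sum_out G
    rw [← Finset.sum_sdiff (Finset.subset_univ T), h1out, h2out] at h0
    omega
  have key : m + mOutDeg G r1 + mOutDeg G r2 = 2 := by omega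
  have hto_r := in0 G hr0
  have nloop := nloop_of G hac
  have no2 := no2_of G hac
  rcases (by omega : m = 0 ∨ m = 1 ∨ m = 2) with hm0|hm1|hm2
  · -- m = 0 : impossible (2-cycle between the recombination vertices)
    exfalso
    have hWall : ∀ v : G.W, v = r ∨ v = r1 ∨ v = r2 := by
      intro v
      have hv : v ∉ Finset.univ \ T := by
        rw [Finset.card_eq_zero.mp (hm.symm.trans hm0)]
        simp
      rw [Finset.mem_sdiff] at hv
      push_neg at hv
      have h := hv (Finset.mem_univ v)
      rw [hmemT] at h
      exact h
    have o1 : mOutDeg G r1 = 1 := by omega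
    have o2' : mOutDeg G r2 = 1 := by omega
    obtain ⟨f1, hf1, _⟩ := out1 G o1
    obtain ⟨f2, hf2, _⟩ := out1 G o2'
    have ht1 : G.tgt f1 = r2 := by
      rcases hWall (G.tgt f1) with h|h|h
      · exact (hto_r f1 h).elim
      · exact (nloop f1 (hf1.trans h.symm)).elim
      · exact h
    have ht2 : G.tgt f2 = r1 := by
      rcases hWall (G.tgt f2) with h|h|h
      · exact (hto_r f2 h).elim
      · exact h
      · exact (nloop f2 (hf2.trans h.symm)).elim
    exact no2 f1 f2 (hf1.trans ht2.symm) (hf2.trans ht1.symm)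
  · -- m = 1 : generators A and D
    obtain ⟨s0, hs0⟩ := Finset.card_eq_one.mp (hm.symm.trans hm1)
    have hs0mem : s0 ∈ Finset.univ \ T := by
      rw [hs0]; exact Finset.mem_singleton_self s0
    have hs0ne : ¬(s0 = r ∨ s0 = r1 ∨ s0 = r2) := by
      rw [Finset.mem_sdiff] at hs0mem
      intro h
      exact hs0mem.2 ((hmemT s0).mpr h)
    push_neg at hs0ne
    obtain ⟨hs0r, hs0r1, hs0r2⟩ := hs0ne
    have hs0deg := hsplit s0 hs0r hs0r1 hs0r2
    have hWall : ∀ v : G.W, v = r ∨ v = s0 ∨ v = r1 ∨ v = r2 := by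
      intro v
      by_cases hv : v ∈ T
      · rw [hmemT] at hv; tauto
      · have h : v ∈ Finset.univ \ T := Finset.mem_sdiff.mpr ⟨Finset.mem_univ v, hv⟩
        rw [hs0, Finset.mem_singleton] at h
        tauto
    have hcW : Fintype.card G.W = 4 := by omega
    have hcE : Fintype.card G.E = 5 := by omega
    rcases (by omega : mOutDeg G r1 = 1 ∧ mOutDeg G r2 = 0 ∨
        mOutDeg G r1 = 0 ∧ mOutDeg G r2 = 1) with ⟨ha, hb⟩|⟨ha, hb⟩
    · rcases case_m1 G hac hbic r s0 r1 r2 hcW hcE hWall hs0r hs0r1 hs0r2 hrr1 hrr2 h12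
        hr0 hrout hs0deg.1 hs0deg.2 hr1 hr2 ha hb with h|h
      · exact Or.inl h
      · exact Or.inr (Or.inr (Or.inr h))
    · have hW' : ∀ v : G.W, v = r ∨ v = s0 ∨ v = r2 ∨ v = r1 := by
        intro v; rcases hWall v with h|h|h|h <;> tauto
      rcases case_m1 G hac hbic r s0 r2 r1 hcW hcE hW' hs0r hs0r2 hs0r1 hrr2 hrr1 h12.symm
        hr0 hrout hs0deg.1 hs0deg.2 hr2 hr1 hb ha with h|h
      · exact Or.inl h
      · exact Or.inr (Or.inr (Or.inr h))
  · -- m = 2 : generators B and C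
    obtain ⟨s1, s2, hs12, hspair⟩ := Finset.card_eq_two.mp (hm.symm.trans hm2)
    have hs1mem : s1 ∈ Finset.univ \ T := by rw [hspair]; simp
    have hs2mem : s2 ∈ Finset.univ \ T := by rw [hspair]; simp
    have hs1ne : ¬(s1 = r ∨ s1 = r1 ∨ s1 = r2) := by
      rw [Finset.mem_sdiff] at hs1mem
      intro h
      exact hs1mem.2 ((hmemT s1).mpr h)
    have hs2ne : ¬(s2 = r ∨ s2 = r1 ∨ s2 = r2) := by
      rw [Finset.mem_sdiff] at hs2mem
      intro h
      exact hs2mem.2 ((hmemT s2).mpr h)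
    push_neg at hs1ne hs2ne
    obtain ⟨hs1r, hs1r1, hs1r2⟩ := hs1ne
    obtain ⟨hs2r, hs2r1, hs2r2⟩ := hs2ne
    have hs1deg := hsplit s1 hs1r hs1r1 hs1r2
    have hs2deg := hsplit s2 hs2r hs2r1 hs2r2
    have hWall : ∀ v : G.W, v = r ∨ v = s1 ∨ v = s2 ∨ v = r1 ∨ v = r2 := by
      intro v
      by_cases hv : v ∈ T
      · rw [hmemT] at hv; tauto
      · have h : v ∈ Finset.univ \ T := Finset.mem_sdiff.mpr ⟨Finset.mem_univ v, hv⟩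
        rw [hspair, Finset.mem_insert, Finset.mem_singleton] at h
        tauto
    have hcW : Fintype.card G.W = 5 := by omega
    have hcE : Fintype.card G.E = 6 := by omega
    have ho1' : mOutDeg G r1 = 0 := by omega
    have ho2' : mOutDeg G r2 = 0 := by omega
    have hr1out0 := out0 G ho1'
    have hr2out0 := out0 G ho2'
    obtain ⟨es1, hes1t, hes1uniq⟩ := in1 G hs1deg.1
    obtain ⟨es2, hes2t, hes2uniq⟩ := in1 G hs2deg.1
    have hes1src : G.src es1 = r ∨ G.src es1 = s2 := by
      rcases hWall (G.src es1) with h|h|h|h|h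
      · exact Or.inl h
      · exact (nloop es1 (h.trans hes1t.symm)).elim
      · exact Or.inr h
      · exact (hr1out0 es1 h).elim
      · exact (hr2out0 es1 h).elim
    have hes2src : G.src es2 = r ∨ G.src es2 = s1 := by
      rcases hWall (G.src es2) with h|h|h|h|h
      · exact Or.inl h
      · exact Or.inr h
      · exact (nloop es2 (h.trans hes2t.symm)).elim
      · exact (hr1out0 es2 h).elim
      · exact (hr2out0 es2 h).elim
    rcases hes1src with hes1src|hes1src <;> rcases hes2src with hes2src|hes2src
    · -- both from the root : generator C
      exact Or.inr (Or.inr (Or.inl (case_m2a G hbic r s1 s2 r1 r2 es1 es2 hcW hcE hWall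
        hs1r hs2r hs12 h12 hs1r1.symm hs2r1.symm hs1r2.symm hs2r2.symm hto_r
        hs1deg.2 hs2deg.2 hr1 hr2 hr1out0 hr2out0
        hes1src hes1t hes1uniq hes2src hes2t hes2uniq)))
    · -- s2 → s1 ... chain with sA = s2? no: es2's source is s1 : chain r → s1 → s2
      exact Or.inr (Or.inl (case_m2b G hbic r s1 s2 r1 r2 es1 es2 hcW hcE hWall
        hs1r hs2r hs12 h12 hrr1.symm hrr2.symm hs1r1.symm hs2r1.symm hs1r2.symm hs2r2.symm
        hto_r hrout hs1deg.2 hs2deg.2 hr1 hr2 hr1out0 hr2out0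
        hes1src hes1t hes1uniq hes2src hes2t hes2uniq))
    · -- chain r → s2 → s1
      have hW' : ∀ v : G.W, v = r ∨ v = s2 ∨ v = s1 ∨ v = r1 ∨ v = r2 := by
        intro v; rcases hWall v with h|h|h|h|h <;> tauto
      exact Or.inr (Or.inl (case_m2b G hbic r s2 s1 r1 r2 es2 es1 hcW hcE hW'
        hs2r hs1r hs12.symm h12 hrr1.symm hrr2.symm hs2r1.symm hs1r1.symm hs2r2.symm hs1r2.symm
        hto_r hrout hs2deg.2 hs1deg.2 hr1 hr2 hr1out0 hr2out0
        hes2src hes2t hes2uniq hes1src hes1t hes1uniq))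
    · exact (no2 es1 es2 (hes1src.trans hes2t.symm) (hes2src.trans hes1t.symm)).elim

end Classify
end Phylo


open Phylo in
/-- There are exactly four simple level-2 generators up to isomorphism. -/
theorem stmt8 :
    ∃ G1 G2 G3 G4 : MultiDigraph,
      IsGenerator 2 G1 ∧ IsGenerator 2 G2 ∧ IsGenerator 2 G3 ∧ IsGenerator 2 G4 ∧
      ¬ MIso G1 G2 ∧ ¬ MIso G1 G3 ∧ ¬ MIso G1 G4 ∧
      ¬ MIso G2 G3 ∧ ¬ MIso G2 G4 ∧ ¬ MIso G3 G4 ∧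
      ∀ G : MultiDigraph, IsGenerator 2 G →
        MIso G G1 ∨ MIso G G2 ∨ MIso G G3 ∨ MIso G G4 := by
  refine ⟨GenA, GenB, GenC, GenD, genA, genB, genC, genD, nAB, nAC, nAD, nBC, nBD, nCD, ?_⟩
  intro G hG
  exact classify G hG
end

section
/- Any level-2 phylogenetic network with n leaves has at most 8n arcs. -/
/-!
Counting in- and out-degrees gives `|E| + 2 = 3r + 2n`, where `r` is the number of recombination
vertices, so it suffices to show `r ≤ 2n`. Every recombination vertex lies in a blob (a
biconnected component with at least three vertices), distinct blobs are vertex-disjoint, and at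
level 2 a blob contains at most two recombination vertices; so it suffices to charge every blob a
different leaf.

Let `(p, q)` be an arc leaving a blob `B`. Since `B` is a maximal biconnected set it has no ear,
and `p` has degree at most three with two neighbours in `B`; hence the component of `q` in the
graph minus `B` is attached to `B` by the arc `(p, q)` alone, and it is exactly the set of
descendants of `q`. Consequently the (at least two) arcs leaving `B` split the leaves below `B`
into nonempty classes, and two blobs with a common leaf below them are nested: one lies below an
arc leaving the other. Fix a linear order on the vertices and charge `B` the least leaf below `B`
outside the class of the least leaf below `B`. If a blob `B₂` lying below an arc leaving `B₁` were
charged the same leaf `φ` as `B₁`, then the least leaf `μ₂` below `B₂` is in the class of `φ` for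
`B₁`, so it is a candidate for `B₁` and `φ ≤ μ₂ ≤ φ`; but `φ` is outside the class of `μ₂` for
`B₂`.
-/

lemma SimpleGraph.Walk.IsPath.notMem_support_dropUntil {V : Type*} {G : SimpleGraph V}
    [DecidableEq V] {a b z w : V} {P : G.Walk a b} (hP : P.IsPath) (hz : z ∈ P.support)
    (hwz : w ≠ z) (hw : w ∈ (P.takeUntil z hz).support) :
    w ∉ (P.dropUntil z hz).support := by
  have hnd : ((P.takeUntil z hz).append (P.dropUntil z hz)).support.Nodup := by
    rw [P.take_spec hz]
    exact hP.support_nodup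
  rw [SimpleGraph.Walk.support_append] at hnd
  rw [← SimpleGraph.Walk.cons_tail_support, List.mem_cons, not_or]
  exact ⟨hwz, fun hwd => (List.nodup_append.mp hnd).2.2 w hw w hwd rfl⟩

namespace Phylo

open Relation SimpleGraph

variable {V : Type*} {R : V → V → Prop}

def ReachIn (R : V → V → Prop) (S : Set V) : V → V → Prop :=
  ReflTransGen fun p q => p ∈ S ∧ q ∈ S ∧ (R p q ∨ R q p)

namespace ReachIn

variable {S T : Set V} {a b c : V}

lemma single (ha : a ∈ S) (hb : b ∈ S) (hab : R a b ∨ R b a) : ReachIn R S a b :=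
  ReflTransGen.single ⟨ha, hb, hab⟩

lemma trans (hab : ReachIn R S a b) (hbc : ReachIn R S b c) : ReachIn R S a c :=
  ReflTransGen.trans hab hbc

lemma symm (h : ReachIn R S a b) : ReachIn R S b a := by
  induction h with
  | refl => exact .refl
  | tail _ hbc ih => exact .head ⟨hbc.2.1, hbc.1, hbc.2.2.symm⟩ ih

lemma mono (hST : S ⊆ T) (h : ReachIn R S a b) : ReachIn R T a b :=
  ReflTransGen.mono (fun _ _ h => ⟨hST h.1, hST h.2.1, h.2.2⟩) _ _ h

lemma mem_right (h : ReachIn R S a b) (ha : a ∈ S) : b ∈ S := by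
  rcases ReflTransGen.cases_tail h with rfl | ⟨c, -, -, hb, -⟩
  exacts [ha, hb]

lemma exists_walk (h : ReachIn R S a b) (ha : a ∈ S) :
    ∃ p : (fromRel R).Walk a b, ∀ v ∈ p.support, v ∈ S := by
  induction h with
  | refl => exact ⟨.nil, by simpa⟩
  | @tail b c _ hbc ih =>
    obtain ⟨p, hp⟩ := ih
    by_cases hbc' : b = c
    · subst hbc'
      exact ⟨p, hp⟩
    · have hadj : (fromRel R).Adj b c := ⟨hbc', hbc.2.2⟩
      refine ⟨p.concat hadj, fun v hv => ?_⟩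
      simp only [Walk.support_concat, List.mem_append,
        List.mem_singleton] at hv
      rcases hv with hv | rfl
      · exact hp v hv
      · exact hbc.2.1

end ReachIn

lemma reachIn_of_walk {S : Set V} :
    ∀ {a b : V} (p : (fromRel R).Walk a b), (∀ v ∈ p.support, v ∈ S) →
      ReachIn R S a b
  | _, _, .nil, _ => .refl
  | _, _, .cons h p, hp =>
    .head ⟨hp _ (by simp), hp _ (by simp), h.2⟩ (reachIn_of_walk p fun v hv => hp v (by simp [hv]))

lemma reachIn_of_reflTransGen {S : Set V} {a b : V} (h : ReflTransGen R a b)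
    (hS : ∀ z, ReflTransGen R a z → ReflTransGen R z b → z ∈ S) : ReachIn R S a b := by
  induction h using ReflTransGen.head_induction_on with
  | refl => exact .refl
  | head hac hcb ih =>
    exact .head ⟨hS _ .refl (.head hac hcb), hS _ (.single hac) hcb, .inl hac⟩
      (ih fun z hcz hzb => hS z (.head hac hcz) hzb)

lemma ConnOn.reachIn {S : Set V} (h : ConnOn R S) {a b : V} (ha : a ∈ S) (hb : b ∈ S) :
    ReachIn R S a b :=
  h a ha b hb

lemma connOn_of_base {S : Set V} (c : V) (h : ∀ z ∈ S, ReachIn R S z c) :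
    ConnOn R S :=
  fun a ha b hb => (h a ha).trans (h b hb).symm

lemma reachIn_takeUntil [DecidableEq V] {S : Set V} {x a b z : V}
    {P : (fromRel R).Walk a b}
    (hz : z ∈ P.support) (hxa : R x a ∨ R a x) (hx : x ∈ S)
    (hS : ∀ v ∈ (P.takeUntil z hz).support, v ∈ S) : ReachIn R S z x :=
  ((ReachIn.single hx (hS a (P.takeUntil z hz).start_mem_support) hxa).trans
    (reachIn_of_walk _ hS)).symm

lemma reachIn_dropUntil [DecidableEq V] {S : Set V} {y a b z : V}
    {P : (fromRel R).Walk a b}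
    (hz : z ∈ P.support) (hby : R b y ∨ R y b) (hy : y ∈ S)
    (hS : ∀ v ∈ (P.dropUntil z hz).support, v ∈ S) : ReachIn R S z y :=
  (reachIn_of_walk _ hS).trans (ReachIn.single (hS b (P.dropUntil z hz).end_mem_support) hy hby)

lemma BiconnSet.union_path {B : Set V} (hB : BiconnSet R B) {x y a b : V} (hx : x ∈ B)
    (hy : y ∈ B) (hxy : x ≠ y) (hxa : R x a ∨ R a x) (hby : R b y ∨ R y b)
    {P : (fromRel R).Walk a b} (hP : P.IsPath) (hPB : ∀ v ∈ P.support, v ∉ B) :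
    BiconnSet R (B ∪ {v | v ∈ P.support}) := by
  classical
  set M : Set V := {v | v ∈ P.support}
  have avoid : ∀ w, ∀ l : List V, (∀ v ∈ l, v ∈ P.support) → w ∉ l →
      ∀ v ∈ l, v ∈ (B ∪ M) \ {w} := fun w l hl hwl v hv =>
    ⟨.inr (hl v hv), fun h => hwl ((h : v = w) ▸ hv)⟩
  have inB : ∀ w ∉ B, B ⊆ (B ∪ M) \ {w} := fun w hw v hv =>
    ⟨.inl hv, fun h => hw ((h : v = w) ▸ hv)⟩
  refine ⟨?_, connOn_of_base x ?_, fun w hw => ?_⟩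
  · obtain ⟨c, hc, d, hd, hcd⟩ := hB.1
    exact ⟨c, .inl hc, d, .inl hd, hcd⟩
  · rintro z (hz | hz)
    · exact (hB.2.1.reachIn hz hx).mono Set.subset_union_left
    · exact reachIn_takeUntil hz hxa (.inl hx) fun v hv =>
        .inr (P.support_takeUntil_subset_support hz hv)
  rcases hw with hwB | hwP
  · -- the whole path survives; attach it at whichever of `x`, `y` is not `w`
    have hM : ∀ v ∈ P.support, v ∈ (B ∪ M) \ {w} := fun v hv =>
      ⟨.inr hv, fun h => hPB v hv ((h : v = w) ▸ hwB)⟩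
    obtain ⟨c, hcB, hcw, hc⟩ : ∃ c ∈ B, c ≠ w ∧
        ∀ z ∈ P.support, ReachIn R ((B ∪ M) \ {w}) z c := by
      by_cases hxw : x = w
      · exact ⟨y, hy, hxw ▸ hxy.symm, fun z hz => reachIn_dropUntil hz hby
          ⟨.inl hy, hxw ▸ hxy.symm⟩ fun v hv => hM v (P.support_dropUntil_subset_support hz hv)⟩
      · exact ⟨x, hx, hxw, fun z hz => reachIn_takeUntil hz hxa ⟨.inl hx, hxw⟩
          fun v hv => hM v (P.support_takeUntil_subset_support hz hv)⟩
    refine connOn_of_base c ?_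
    rintro z ⟨hz | hz, hzw⟩
    · exact ((hB.2.2 w hwB).reachIn ⟨hz, hzw⟩ ⟨hcB, hcw⟩).mono
        (Set.sdiff_subset_sdiff_left Set.subset_union_left)
    · exact hc z hz
  · have hwB : w ∉ B := hPB w hwP
    refine connOn_of_base x ?_
    rintro z ⟨hz | hz, hzw⟩
    · exact (hB.2.1.reachIn hz hx).mono (inB w hwB)
    by_cases hwt : w ∈ (P.takeUntil z hz).support
    · have hwd := hP.notMem_support_dropUntil hz (fun h => hzw h.symm) hwt
      exact (reachIn_dropUntil hz hby (inB w hwB hy)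
        (avoid w _ (P.support_dropUntil_subset_support hz) hwd)).trans
        ((hB.2.1.reachIn hy hx).mono (inB w hwB))
    · exact reachIn_takeUntil hz hxa (inB w hwB hx)
        (avoid w _ (P.support_takeUntil_subset_support hz) hwt)

theorem IsBCC.not_ear {B : Set V} (hB : IsBCC R B) {x y a b : V} (hx : x ∈ B) (hy : y ∈ B)
    (hxy : x ≠ y) (hxa : R x a ∨ R a x) (hby : R b y ∨ R y b) (ha : a ∉ B)
    (hab : ReachIn R Bᶜ a b) : False := by
  classical
  obtain ⟨p, hp⟩ := hab.exists_walk ha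
  have hPB : ∀ v ∈ p.bypass.support, v ∉ B := fun v hv => hp v (p.support_bypass_subset_support hv)
  have hmax := hB.2 _ (hB.1.union_path hx hy hxy hxa hby p.bypass_isPath hPB)
    Set.subset_union_left
  exact ha (hmax ▸ Set.mem_union_right _ p.bypass.start_mem_support)

lemma BiconnSet.connOn_diff {S : Set V} (hS : BiconnSet R S) (w : V) : ConnOn R (S \ {w}) := by
  by_cases hw : w ∈ S
  · exact hS.2.2 w hw
  · rw [Set.sdiff_singleton_eq_self hw]
    exact hS.2.1

lemma ConnOn.union {S T : Set V} (hS : ConnOn R S) (hT : ConnOn R T) {x : V} (hxS : x ∈ S)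
    (hxT : x ∈ T) : ConnOn R (S ∪ T) := by
  refine connOn_of_base x ?_
  rintro y (hy | hy)
  · exact (hS.reachIn hy hxS).mono Set.subset_union_left
  · exact (hT.reachIn hy hxT).mono Set.subset_union_right

lemma BiconnSet.union {S T : Set V} (hS : BiconnSet R S) (hT : BiconnSet R T) {x y : V}
    (hxy : x ≠ y) (hxS : x ∈ S) (hxT : x ∈ T) (hyS : y ∈ S) (hyT : y ∈ T) :
    BiconnSet R (S ∪ T) := by
  refine ⟨?_, hS.2.1.union hT.2.1 hxS hxT, fun w _ => ?_⟩
  · obtain ⟨a, ha, b, hb, hab⟩ := hS.1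
    exact ⟨a, .inl ha, b, .inl hb, hab⟩
  · rw [Set.union_sdiff_distrib]
    obtain ⟨c, hcS, hcT, hcw⟩ : ∃ c ∈ S, c ∈ T ∧ c ≠ w := by
      by_cases hxw : x = w
      · exact ⟨y, hyS, hyT, hxw ▸ hxy.symm⟩
      · exact ⟨x, hxS, hxT, hxw⟩
    exact (hS.connOn_diff w).union (hT.connOn_diff w) (x := c) ⟨hcS, hcw⟩ ⟨hcT, hcw⟩

lemma BiconnSet.exists_isBCC [Finite V] {S : Set V} (hS : BiconnSet R S) :
    ∃ B, IsBCC R B ∧ S ⊆ B := by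
  obtain ⟨B, ⟨hB, hSB⟩, hmax⟩ := Set.Finite.exists_maximalFor id
    {T : Set V | BiconnSet R T ∧ S ⊆ T} (Set.toFinite _) ⟨S, hS, subset_rfl⟩
  exact ⟨B, ⟨hB, fun T hT hBT => (hmax ⟨hT, hSB.trans hBT⟩ hBT).antisymm hBT⟩, hSB⟩

lemma biconnSet_pair {a b : V} (hab : R a b) (hne : a ≠ b) : BiconnSet R {a, b} := by
  refine ⟨⟨a, by simp, b, by simp, hab⟩, connOn_of_base a ?_, fun w hw => ?_⟩
  · rintro z (rfl | rfl)
    · exact .refl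
    · exact ReachIn.single (by simp) (by simp) (.inr hab)
  · obtain ⟨c, hc⟩ : ∃ c, ({a, b} : Set V) \ {w} = {c} := by
      rcases hw with rfl | rfl
      · exact ⟨b, Set.pair_sdiff_left hne⟩
      · exact ⟨a, Set.pair_sdiff_right hne⟩
    rw [hc]
    rintro _ rfl _ rfl
    exact .refl

lemma BiconnSet.exists_two_adj {B : Set V} (hB : BiconnSet R B) (h3 : 3 ≤ B.ncard)
    (hirr : ∀ v, ¬ R v v) {v : V} (hv : v ∈ B) :
    ∃ n₁ ∈ B, ∃ n₂ ∈ B, n₁ ≠ n₂ ∧ (R v n₁ ∨ R n₁ v) ∧ (R v n₂ ∨ R n₂ v) := by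
  have other : ∀ x y : V, ∃ b ∈ B, b ≠ x ∧ b ≠ y := fun x y => by
    obtain ⟨b, hb, hbxy⟩ := Set.exists_mem_notMem_of_ncard_lt_ncard (t := B)
      ((Set.ncard_insert_le x {y}).trans_lt (by rw [Set.ncard_singleton]; omega))
      (Set.toFinite {x, y})
    exact ⟨b, hb, fun h => hbxy (.inl h), fun h => hbxy (.inr h)⟩
  have first_step : ∀ {S : Set V} {b : V}, ReachIn R S v b → b ≠ v →
      ∃ c ∈ S, c ≠ v ∧ (R v c ∨ R c v) := fun h hbv => by
    rcases ReflTransGen.cases_head h with rfl | ⟨c, ⟨-, hc, hvc⟩, -⟩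
    · exact absurd rfl hbv
    · refine ⟨c, hc, ?_, hvc⟩
      rintro rfl
      exact hirr c (hvc.elim id id)
  obtain ⟨b₁, hb₁, hb₁v, -⟩ := other v v
  obtain ⟨n₁, hn₁, hn₁v, hvn₁⟩ := first_step (hB.2.1.reachIn hv hb₁) hb₁v
  obtain ⟨b₂, hb₂, hb₂v, hb₂n₁⟩ := other v n₁
  obtain ⟨n₂, ⟨hn₂, hn₂n₁⟩, -, hvn₂⟩ := first_step
    ((hB.2.2 n₁ hn₁).reachIn ⟨hv, hn₁v.symm⟩ ⟨hb₂, hb₂n₁⟩) hb₂v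
  exact ⟨n₁, hn₁, n₂, hn₂, fun h => hn₂n₁ h.symm, hvn₁, hvn₂⟩

section Network

variable {B B₁ B₂ : Set V}

lemma IsPhyloNet.irrefl (hR : IsPhyloNet R) (v : V) : ¬ R v v :=
  fun h => hR.1 v (.single h)

lemma IsPhyloNet.not_reach_of_arc (hR : IsPhyloNet R) {a b : V} (hab : R a b) :
    ¬ ReflTransGen R b a :=
  fun hba => hR.1 a (.head' hab hba)

lemma IsPhyloNet.ncard_adj_le (hR : IsPhyloNet R) (v : V) : {u | R v u ∨ R u v}.ncard ≤ 3 :=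
  calc {u | R v u ∨ R u v}.ncard ≤ outDeg R v + inDeg R v := Set.ncard_union_le _ _
    _ ≤ 3 := by rcases hR.2.2 v with ⟨h₁, h₂⟩ | ⟨h₁, h₂⟩ | ⟨h₁, h₂⟩ | ⟨h₁, h₂⟩ <;> omega

def IsBlob (R : V → V → Prop) (B : Set V) : Prop := IsBCC R B ∧ 3 ≤ B.ncard

def outArcs (R : V → V → Prop) (S : Set V) : Set (V × V) :=
  {e | R e.1 e.2 ∧ e.1 ∈ S ∧ e.2 ∉ S}

def outLeaves (R : V → V → Prop) (B : Set V) : Set V :=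
  {x | IsLf R x ∧ ∃ e ∈ outArcs R B, ReflTransGen R e.2 x}

def SameSide (R : V → V → Prop) (B : Set V) (x y : V) : Prop :=
  ∃ e ∈ outArcs R B, ReflTransGen R e.2 x ∧ ReflTransGen R e.2 y

def IsBlobLeaf [LinearOrder V] (R : V → V → Prop) (B : Set V) (φ : V) : Prop :=
  ∃ μ, IsLeast (outLeaves R B) μ ∧ IsLeast {x ∈ outLeaves R B | ¬ SameSide R B μ x} φ

lemma IsBlobLeaf.isLf [LinearOrder V] {φ : V} (h : IsBlobLeaf R B φ) : IsLf R φ :=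
  let ⟨_, _, hφ⟩ := h
  hφ.1.1.1

variable [Finite V]

lemma wellFounded_of_acyclic (hacyc : ∀ v, ¬ TransGen R v v) : WellFounded R := by
  have : IsTrans V (TransGen R) := ⟨fun _ _ _ => TransGen.trans⟩
  have : Std.Irrefl (TransGen R) := ⟨hacyc⟩
  exact Subrelation.wf TransGen.single (Finite.wellFounded_of_trans_of_irrefl _)

lemma IsPhyloNet.reach_of_inDeg_eq_zero (hR : IsPhyloNet R) {r : V} (hr : inDeg R r = 0)
    (v : V) : ReflTransGen R r v := by
  induction v using (wellFounded_of_acyclic hR.1).induction with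
  | _ v ih =>
    by_cases hv : inDeg R v = 0
    · rw [hR.2.1.unique hr hv]
    · obtain ⟨u, hu⟩ := Set.nonempty_of_ncard_ne_zero hv
      exact (ih u hu).tail hu

lemma IsPhyloNet.exists_leaf_reach (hR : IsPhyloNet R) (v : V) :
    ∃ ℓ, IsLf R ℓ ∧ ReflTransGen R v ℓ := by
  have hwf := wellFounded_of_acyclic (R := flip R) fun v h => hR.1 v (transGen_swap.mp h)
  induction v using hwf.induction with
  | _ v ih =>
    by_cases hv : outDeg R v = 0
    · exact ⟨v, hv, .refl⟩
    · obtain ⟨c, hc⟩ := Set.nonempty_of_ncard_ne_zero hv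
      obtain ⟨ℓ, hℓ, hcℓ⟩ := ih c hc
      exact ⟨ℓ, hℓ, .head hc hcℓ⟩

lemma IsBlob.eq_of_adj_of_notMem (hB : IsBlob R B) (hR : IsPhyloNet R) {p u u' : V}
    (hp : p ∈ B) (hu : u ∉ B) (hu' : u' ∉ B) (hpu : R p u ∨ R u p) (hpu' : R p u' ∨ R u' p) :
    u = u' := by
  by_contra hne
  obtain ⟨n₁, hn₁, n₂, hn₂, hn, hpn₁, hpn₂⟩ := hB.1.1.exists_two_adj hB.2 hR.irrefl hp
  have hsub : ({n₁, n₂, u, u'} : Set V) ⊆ {w | R p w ∨ R w p} := by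
    rintro w (rfl | rfl | rfl | rfl) <;> assumption
  have hcard : ({n₁, n₂, u, u'} : Set V).ncard = 4 := by
    have hB' : ∀ n ∈ B, n ≠ u ∧ n ≠ u' := fun n hn =>
      ⟨fun h => hu (h ▸ hn), fun h => hu' (h ▸ hn)⟩
    rw [Set.ncard_insert_of_notMem, Set.ncard_insert_of_notMem, Set.ncard_pair hne]
    · simp [hB' n₂ hn₂]
    · simp [hn, hB' n₁ hn₁]
  have := Set.ncard_le_ncard hsub (Set.toFinite _)
  have := hR.ncard_adj_le p
  omega

lemma IsBlob.eq_of_mem (hB₁ : IsBlob R B₁) (hB₂ : IsBlob R B₂) (hR : IsPhyloNet R) {v : V}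
    (hv₁ : v ∈ B₁) (hv₂ : v ∈ B₂) : B₁ = B₂ := by
  by_contra hne
  have share : ∀ w ∈ B₁, w ∈ B₂ → w = v := fun w hw₁ hw₂ => by
    by_contra hwv
    have hU := hB₁.1.1.union hB₂.1.1 hwv hw₁ hw₂ hv₁ hv₂
    exact hne ((hB₁.1.2 _ hU Set.subset_union_left).symm.trans
      (hB₂.1.2 _ hU Set.subset_union_right))
  obtain ⟨n₁, hn₁, n₂, hn₂, hn, hvn₁, hvn₂⟩ := hB₂.1.1.exists_two_adj hB₂.2 hR.irrefl hv₂
  have out : ∀ n ∈ B₂, (R v n ∨ R n v) → n ∉ B₁ := fun n hn hvn hn₁ => by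
    obtain rfl := share n hn₁ hn
    exact hR.irrefl n (hvn.elim id id)
  exact hn (hB₁.eq_of_adj_of_notMem hR hv₁ (out n₁ hn₁ hvn₁) (out n₂ hn₂ hvn₂) hvn₁ hvn₂)

lemma IsPhyloNet.exists_adj_reachIn_of_parents (hR : IsPhyloNet R) {u₁ u₂ v : V}
    (hu : u₁ ≠ u₂) (h₁ : R u₁ v) (h₂ : R u₂ v) :
    ∃ a, (R u₁ a ∨ R a u₁) ∧ a ∉ ({u₁, v} : Set V) ∧ ReachIn R {u₁, v}ᶜ a u₂ := by
  have hcompl : ∀ z, z ≠ u₁ → z ≠ v → z ∈ ({u₁, v} : Set V)ᶜ := by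
    rintro z h₁ h₂ (rfl | rfl) <;> contradiction
  have not_anc_v : ∀ z, ReflTransGen R z u₂ → z ≠ v := fun z hz hzv =>
    hR.not_reach_of_arc h₂ (hzv ▸ hz)
  by_cases hu₁₂ : ReflTransGen R u₁ u₂
  · obtain ⟨c, hu₁c, hcu₂⟩ : ∃ c, R u₁ c ∧ ReflTransGen R c u₂ :=
      (ReflTransGen.cases_head hu₁₂).resolve_left hu
    have hS : ∀ z, ReflTransGen R c z → ReflTransGen R z u₂ → z ∈ ({u₁, v} : Set V)ᶜ :=
      fun z hcz hzu₂ =>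
        hcompl z (fun h => hR.not_reach_of_arc hu₁c (h ▸ hcz)) (not_anc_v z hzu₂)
    exact ⟨c, .inl hu₁c, hS c .refl hcu₂, reachIn_of_reflTransGen hcu₂ hS⟩
  · -- go up from `u₁` to the root and down to `u₂`
    obtain ⟨r, hr, -⟩ := hR.2.1
    obtain ⟨w, hwu₁⟩ := Set.nonempty_of_ncard_ne_zero
      fun h => hu₁₂ (hR.reach_of_inDeg_eq_zero h u₂)
    have hSw : ∀ z, ReflTransGen R z w → z ∈ ({u₁, v} : Set V)ᶜ := fun z hzw =>
      hcompl z (fun h => hR.not_reach_of_arc hwu₁ (h ▸ hzw))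
        fun h => hR.not_reach_of_arc h₁ (h ▸ hzw.tail hwu₁)
    have hrw : ReachIn R {u₁, v}ᶜ r w :=
      reachIn_of_reflTransGen (hR.reach_of_inDeg_eq_zero hr w) fun z _ => hSw z
    have hru₂ : ReachIn R {u₁, v}ᶜ r u₂ :=
      reachIn_of_reflTransGen (hR.reach_of_inDeg_eq_zero hr u₂)
        fun z _ hzu₂ => hcompl z (fun h => hu₁₂ (h ▸ hzu₂)) (not_anc_v z hzu₂)
    exact ⟨w, .inr hwu₁, hSw w .refl, hrw.symm.trans hru₂⟩

lemma IsPhyloNet.exists_blob_of_inDeg_eq_two (hR : IsPhyloNet R) {v : V}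
    (hv : inDeg R v = 2) : ∃ B, IsBlob R B ∧ v ∈ B := by
  obtain ⟨u₁, u₂, hu, hset⟩ := Set.ncard_eq_two.mp hv
  have h₁ : R u₁ v := (hset ▸ Set.mem_insert u₁ {u₂} : u₁ ∈ {u | R u v})
  have h₂ : R u₂ v := (hset ▸ Set.mem_insert_of_mem u₁ rfl : u₂ ∈ {u | R u v})
  have hu₁v : u₁ ≠ v := fun h => hR.irrefl v (h ▸ h₁)
  obtain ⟨B, hB, hsub⟩ := (biconnSet_pair h₁ hu₁v).exists_isBCC
  refine ⟨B, ⟨hB, ?_⟩, hsub (by simp)⟩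
  by_contra! hlt
  obtain rfl : {u₁, v} = B :=
    Set.eq_of_subset_of_ncard_le hsub (by rw [Set.ncard_pair hu₁v]; omega) (Set.toFinite _)
  obtain ⟨a, hu₁a, ha, hau₂⟩ := hR.exists_adj_reachIn_of_parents hu h₁ h₂
  exact hB.not_ear (by simp) (by simp) hu₁v hu₁a (.inl h₂) ha hau₂

lemma IsBlob.eq_of_reachIn_compl_of_adj (hB : IsBlob R B) (hR : IsPhyloNet R) {e : V × V}
    (he : e ∈ outArcs R B) {x y : V} (hx : ReachIn R Bᶜ e.2 x) (hy : y ∈ B)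
    (hxy : R x y ∨ R y x) : y = e.1 ∧ x = e.2 := by
  obtain rfl : y = e.1 := by
    by_contra hye
    exact hB.1.not_ear he.2.1 hy (Ne.symm hye) (.inl he.1) hxy he.2.2 hx
  exact ⟨rfl, hB.eq_of_adj_of_notMem hR he.2.1 (hx.mem_right he.2.2) he.2.2 hxy.symm (.inl he.1)⟩

lemma IsBlob.reachIn_compl_of_reach (hB : IsBlob R B) (hR : IsPhyloNet R) {e : V × V}
    (he : e ∈ outArcs R B) {x z : V} (hx : ReachIn R Bᶜ e.2 x) (hxz : ReflTransGen R x z) :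
    ReachIn R Bᶜ e.2 z := by
  induction hxz with
  | refl => exact hx
  | @tail y z _ hyz ih =>
    have hz : z ∉ B := fun hz => by
      obtain ⟨rfl, rfl⟩ := hB.eq_of_reachIn_compl_of_adj hR he ih hz (.inl hyz)
      exact hR.not_reach_of_arc he.1 (.single hyz)
    exact ih.tail ⟨ih.mem_right he.2.2, hz, .inl hyz⟩

lemma IsBlob.reach_of_reachIn_compl (hB : IsBlob R B) (hR : IsPhyloNet R) {e : V × V}
    (he : e ∈ outArcs R B) {x : V} (hx : ReachIn R Bᶜ e.2 x) : ReflTransGen R e.2 x := by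
  obtain ⟨r, hr, -⟩ := hR.2.1
  -- follow a directed path from the root, which can only enter the component through `e`
  induction hR.reach_of_inDeg_eq_zero hr x with
  | refl =>
    have hp := hB.reachIn_compl_of_reach hR he hx (hR.reach_of_inDeg_eq_zero hr e.1)
    exact absurd he.2.1 (hp.mem_right he.2.2)
  | @tail a b _ hab ih =>
    by_cases ha : a ∈ B
    · obtain ⟨rfl, rfl⟩ := hB.eq_of_reachIn_compl_of_adj hR he hx ha (.inr hab)
      exact .refl
    · exact (ih (hx.tail ⟨hx.mem_right he.2.2, ha, .inr hab⟩)).tail hab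

lemma IsBlob.reach_or_eq_of_arc (hB : IsBlob R B) (hR : IsPhyloNet R) {e : V × V}
    (he : e ∈ outArcs R B) {s t : V} (hts : R t s) (hs : ReflTransGen R e.2 s) :
    ReflTransGen R e.2 t ∨ t = e.1 ∧ s = e.2 := by
  have hs' := hB.reachIn_compl_of_reach hR he .refl hs
  by_cases ht : t ∈ B
  · exact .inr (hB.eq_of_reachIn_compl_of_adj hR he hs' ht (.inr hts))
  · exact .inl (hB.reach_of_reachIn_compl hR he (hs'.tail ⟨hs'.mem_right he.2.2, ht, .inr hts⟩))

lemma IsBlob.reach_of_connOn (hB : IsBlob R B) (hR : IsPhyloNet R) {e : V × V}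
    (he : e ∈ outArcs R B) {S : Set V} (hS : ConnOn R S) (hSB : S ⊆ Bᶜ) {x₀ : V} (hx₀ : x₀ ∈ S)
    (hex₀ : ReflTransGen R e.2 x₀) : ∀ x ∈ S, ReflTransGen R e.2 x := fun _ hx =>
  hB.reach_of_reachIn_compl hR he
    ((hB.reachIn_compl_of_reach hR he .refl hex₀).trans ((hS.reachIn hx₀ hx).mono hSB))

lemma IsBlob.outArcs_eq_of_reach (hB : IsBlob R B) (hR : IsPhyloNet R) {e e' : V × V}
    (he : e ∈ outArcs R B) (he' : e' ∈ outArcs R B) {x : V} (hx : ReflTransGen R e.2 x)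
    (hx' : ReflTransGen R e'.2 x) : e = e' := by
  have hee' := (hB.reachIn_compl_of_reach hR he .refl hx).trans
    (hB.reachIn_compl_of_reach hR he' .refl hx').symm
  obtain ⟨h₁, h₂⟩ := hB.eq_of_reachIn_compl_of_adj hR he hee' he'.2.1 (.inr he'.1)
  exact Prod.ext h₁.symm h₂.symm

lemma IsBlob.reach_or_reach_tail (hB : IsBlob R B) (hR : IsPhyloNet R) {e : V × V}
    (he : e ∈ outArcs R B) {x ℓ : V} (hxℓ : ReflTransGen R x ℓ) (heℓ : ReflTransGen R e.2 ℓ) :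
    ReflTransGen R e.2 x ∨ ReflTransGen R x e.1 := by
  induction hxℓ using ReflTransGen.head_induction_on with
  | refl => exact .inl heℓ
  | head hxc _ ih =>
    rcases ih with hc | hc
    · rcases hB.reach_or_eq_of_arc hR he hxc hc with hx | ⟨rfl, -⟩
      exacts [.inl hx, .inr .refl]
    · exact .inr (.head hxc hc)

lemma IsBlob.nested (hB₁ : IsBlob R B₁) (hB₂ : IsBlob R B₂) (hR : IsPhyloNet R)
    (hne : B₁ ≠ B₂) {e₁ e₂ : V × V} (he₁ : e₁ ∈ outArcs R B₁) (he₂ : e₂ ∈ outArcs R B₂) {ℓ : V}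
    (h₁ : ReflTransGen R e₁.2 ℓ) (h₂ : ReflTransGen R e₂.2 ℓ) :
    (∃ e ∈ outArcs R B₁, ∀ x ∈ B₂, ReflTransGen R e.2 x) ∨
      ∃ e ∈ outArcs R B₂, ∀ x ∈ B₁, ReflTransGen R e.2 x := by
  have hdisj : B₁ ⊆ B₂ᶜ := fun x hx₁ hx₂ => hne (hB₁.eq_of_mem hB₂ hR hx₁ hx₂)
  rcases hB₁.reach_or_reach_tail hR he₁ h₂ h₁ with h | h
  · rcases hB₁.reach_or_eq_of_arc hR he₁ he₂.1 h with h' | ⟨h', -⟩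
    · exact .inl ⟨e₁, he₁, hB₁.reach_of_connOn hR he₁ hB₂.1.1.2.1
        (Set.subset_compl_comm.mp hdisj) he₂.2.1 h'⟩
    · exact absurd he₂.2.1 (h' ▸ hdisj he₁.2.1)
  · exact .inr ⟨e₂, he₂, hB₂.reach_of_connOn hR he₂ hB₁.1.1.2.1 hdisj he₁.2.1 h⟩

lemma IsBlob.sameSide_trans (hB : IsBlob R B) (hR : IsPhyloNet R) {x y z : V}
    (hxy : SameSide R B x y) (hyz : SameSide R B y z) : SameSide R B x z := by
  obtain ⟨e, he, hx, hy⟩ := hxy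
  obtain ⟨e', he', hy', hz⟩ := hyz
  obtain rfl := hB.outArcs_eq_of_reach hR he he' hy hy'
  exact ⟨e, he, hx, hz⟩

lemma exists_isLeast [LinearOrder V] {s : Set V} (hs : s.Nonempty) : ∃ a, IsLeast s a :=
  let ⟨a, ha, h⟩ := Set.exists_min_image s id (Set.toFinite s) hs
  ⟨a, ha, h⟩

lemma IsBlob.exists_blobLeaf [LinearOrder V] (hB : IsBlob R B) (hR : IsPhyloNet R)
    (h2 : 2 ≤ (outArcs R B).ncard) : ∃ φ, IsBlobLeaf R B φ := by
  obtain ⟨e₁, he₁, e₂, he₂, h₁₂⟩ := (Set.one_lt_ncard (Set.toFinite _)).mp h2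
  obtain ⟨ℓ, hℓ, heℓ⟩ := hR.exists_leaf_reach e₁.2
  obtain ⟨μ, hμ⟩ := exists_isLeast (s := outLeaves R B) ⟨ℓ, hℓ, e₁, he₁, heℓ⟩
  obtain ⟨e, he, heμ⟩ := hμ.1.2
  obtain ⟨e', he', hee'⟩ : ∃ e' ∈ outArcs R B, e' ≠ e := by
    by_cases h : e₁ = e
    exacts [⟨e₂, he₂, h ▸ h₁₂.symm⟩, ⟨e₁, he₁, h⟩]
  obtain ⟨ℓ', hℓ', he'ℓ'⟩ := hR.exists_leaf_reach e'.2
  have hℓ'μ : ¬ SameSide R B μ ℓ' := fun ⟨f, hf, hfμ, hfℓ'⟩ =>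
    hee' ((hB.outArcs_eq_of_reach hR hf he' hfℓ' he'ℓ').symm.trans
      (hB.outArcs_eq_of_reach hR hf he hfμ heμ))
  obtain ⟨φ, hφ⟩ := exists_isLeast (s := {x ∈ outLeaves R B | ¬ SameSide R B μ x})
    ⟨ℓ', ⟨hℓ', e', he', he'ℓ'⟩, hℓ'μ⟩
  exact ⟨φ, μ, hμ, hφ⟩

lemma IsBlob.blobLeaf_ne_of_below [LinearOrder V] (hB₁ : IsBlob R B₁) (hR : IsPhyloNet R)
    {e : V × V} (he : e ∈ outArcs R B₁) (hbelow : ∀ x ∈ B₂, ReflTransGen R e.2 x) {φ : V}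
    (h₁ : IsBlobLeaf R B₁ φ) (h₂ : IsBlobLeaf R B₂ φ) : False := by
  obtain ⟨μ₁, -, hφ₁⟩ := h₁
  obtain ⟨μ₂, hμ₂, hφ₂⟩ := h₂
  have hleaves : ∀ x ∈ outLeaves R B₂, ReflTransGen R e.2 x := fun x ⟨_, f, hf, hfx⟩ =>
    ((hbelow f.1 hf.2.1).tail hf.1).trans hfx
  have hμ₂K : μ₂ ∈ {x ∈ outLeaves R B₁ | ¬ SameSide R B₁ μ₁ x} :=
    ⟨⟨hμ₂.1.1, e, he, hleaves μ₂ hμ₂.1⟩, fun h => hφ₁.1.2 (hB₁.sameSide_trans hR h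
      ⟨e, he, hleaves μ₂ hμ₂.1, hleaves φ hφ₂.1.1⟩)⟩
  obtain rfl : μ₂ = φ := le_antisymm (hμ₂.2 hφ₂.1.1) (hφ₁.2 hμ₂K)
  obtain ⟨-, f, hf, hfμ⟩ := hμ₂.1
  exact hφ₂.1.2 ⟨f, hf, hfμ, hfμ⟩

lemma IsBlob.eq_of_blobLeaf [LinearOrder V] (hB₁ : IsBlob R B₁) (hB₂ : IsBlob R B₂)
    (hR : IsPhyloNet R) {φ : V} (h₁ : IsBlobLeaf R B₁ φ) (h₂ : IsBlobLeaf R B₂ φ) : B₁ = B₂ := by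
  by_contra hne
  obtain ⟨-, e₁, he₁, hφ₁⟩ := (h₁.choose_spec.2.1.1 : φ ∈ outLeaves R B₁)
  obtain ⟨-, e₂, he₂, hφ₂⟩ := (h₂.choose_spec.2.1.1 : φ ∈ outLeaves R B₂)
  rcases hB₁.nested hB₂ hR hne he₁ he₂ hφ₁ hφ₂ with ⟨e, he, hbelow⟩ | ⟨e, he, hbelow⟩
  · exact hB₁.blobLeaf_ne_of_below hR he hbelow h₁ h₂
  · exact hB₂.blobLeaf_ne_of_below hR he hbelow h₂ h₁

end Network

lemma ncard_setOf_eq_card_filter [Fintype V] (p : V → Prop) [DecidablePred p] :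
    {v | p v}.ncard = (Finset.univ.filter p).card := by
  rw [← Finset.coe_filter_univ, Set.ncard_coe_finset]

lemma ncard_arcs_eq_sum_inDeg [Fintype V] :
    {e : V × V | R e.1 e.2}.ncard = ∑ v, inDeg R v := by
  classical
  simp only [inDeg, ← Finset.coe_filter_univ, Set.ncard_coe_finset, Finset.card_filter,
    Fintype.sum_prod_type]
  exact Finset.sum_comm

lemma ncard_arcs_eq_sum_outDeg [Fintype V] :
    {e : V × V | R e.1 e.2}.ncard = ∑ v, outDeg R v := by
  classical
  simp only [outDeg, ← Finset.coe_filter_univ, Set.ncard_coe_finset, Finset.card_filter,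
    Fintype.sum_prod_type]

lemma IsPhyloNet.ncard_arcs_add_two [Fintype V] (hR : IsPhyloNet R) :
    {e : V × V | R e.1 e.2}.ncard + 2 =
      3 * {v | inDeg R v = 2}.ncard + 2 * (netLeaves R).ncard := by
  classical
  -- checked on each vertex type; summed over `V` it reads `3r + 2n + |E| = 2|E| + 2`
  have hv : ∀ v, 3 * (if inDeg R v = 2 then 1 else 0) + 2 * (if outDeg R v = 0 then 1 else 0) +
      outDeg R v = 2 * inDeg R v + 2 * (if inDeg R v = 0 then 1 else 0) := fun v => by
    rcases hR.2.2 v with ⟨h₁, h₂⟩ | ⟨h₁, h₂⟩ | ⟨h₁, h₂⟩ | ⟨h₁, h₂⟩ <;> simp [h₁, h₂]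
  have hsum := Finset.sum_congr rfl fun v (_ : v ∈ Finset.univ) => hv v
  obtain ⟨r, hr, hr'⟩ := hR.2.1
  have hroot : Finset.univ.filter (inDeg R · = 0) = {r} :=
    Finset.eq_singleton_iff_unique_mem.mpr
      ⟨by simpa using hr, fun v hv => hr' v (by simpa using hv)⟩
  simp only [Finset.sum_add_distrib, ← Finset.mul_sum, Finset.sum_boole, hroot,
    ← ncard_arcs_eq_sum_outDeg, ← ncard_arcs_eq_sum_inDeg] at hsum
  have hleaves : (netLeaves R).ncard = (Finset.univ.filter (outDeg R · = 0)).card :=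
    ncard_setOf_eq_card_filter (outDeg R · = 0)
  rw [ncard_setOf_eq_card_filter (inDeg R · = 2), hleaves]
  simp only [Finset.card_singleton, Nat.cast_id, mul_one] at hsum
  omega

lemma ncard_le_mul_ncard_of_mapsTo {α β : Type*} {s : Set α} {t : Set β} (hs : s.Finite)
    (ht : t.Finite) {f : α → β} (hf : Set.MapsTo f s t) (n : ℕ)
    (hn : ∀ b ∈ t, {a ∈ s | f a = b}.ncard ≤ n) : s.ncard ≤ n * t.ncard := by
  classical
  rw [Set.ncard_eq_toFinset_card s hs, Set.ncard_eq_toFinset_card t ht]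
  refine Finset.card_le_mul_card_image_of_maps_to (f := f) (fun a ha => ?_) n fun b hb => ?_
  · simpa using hf (by simpa using ha)
  · rw [← Set.ncard_coe_finset, Finset.coe_filter]
    simpa using hn b (by simpa using hb)

lemma GoodNet.ncard_recomb_le [Fintype V] (hgood : GoodNet R) (hlev : LevelK 2 R) :
    {v | inDeg R v = 2}.ncard ≤ 2 * (netLeaves R).ncard := by
  let _ : LinearOrder V := LinearOrder.lift' _ (Fintype.equivFin V).injective
  have hR := hgood.1
  have : Nonempty V := ⟨hR.2.1.exists.choose⟩
  choose! β hβ hvβ using fun v (hv : inDeg R v = 2) => hR.exists_blob_of_inDeg_eq_two hv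
  choose! φ hφ using fun B (hB : IsBlob R B) =>
    hB.exists_blobLeaf hR ((Nat.le_succ 2).trans (hgood.2 B hB.1 hB.2))
  refine ncard_le_mul_ncard_of_mapsTo (s := {v | inDeg R v = 2}) (t := netLeaves R)
    (Set.toFinite _) (Set.toFinite _) (f := fun v => φ (β v))
    (fun v hv => (hφ _ (hβ v hv)).isLf) 2 fun ℓ _ => ?_
  rcases Set.eq_empty_or_nonempty {v | inDeg R v = 2 ∧ φ (β v) = ℓ} with h | ⟨v₀, hv₀, rfl⟩
  · simp [h]
  calc _ ≤ {u ∈ β v₀ | inDeg R u = 2}.ncard := Set.ncard_le_ncard ?_ (Set.toFinite _)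
    _ ≤ 2 := hlev _ (hβ v₀ hv₀).1
  rintro v ⟨hv, hφv⟩
  have hβv := (hβ v hv).eq_of_blobLeaf (hβ v₀ hv₀) hR (hφ _ (hβ v hv)) (hφv ▸ hφ _ (hβ v₀ hv₀))
  exact ⟨hβv ▸ hvβ v hv, hv⟩

end Phylo

open Phylo in
/-- Any level-2 phylogenetic network with `n` leaves has at most `8n`
arcs. -/
theorem stmt10 {V : Type*} [Fintype V] (R : V → V → Prop)
    (hgood : GoodNet R) (hlev : LevelK 2 R) :
    {p : V × V | R p.1 p.2}.ncard ≤ 8 * (netLeaves R).ncard := by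
  have h₁ := hgood.1.ncard_arcs_add_two
  have h₂ := hgood.ncard_recomb_le hlev
  omega
end

section
/- If a phylogenetic network N consistent with a dense triplet set T contains as a subgraph a caterpillar with leaf set L', then L' is a caterpillarset with respect to T. -/
namespace Phylo

/-- `L'` is a caterpillarset w.r.t. `T`: it is empty or can be enumerated
`ℓ_1, …, ℓ_k` such that each prefix `{ℓ_1, …, ℓ_i}` is an SN-set of `T`. -/
def CaterpillarSet {V : Type*} (T : Set (V × V × V)) (L' : Set V) : Prop :=
  L' = ∅ ∨ ∃ (k : ℕ) (f : ℕ → V), 1 ≤ k ∧ Set.InjOn f (Set.Icc 1 k) ∧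
    L' = f '' Set.Icc 1 k ∧ ∀ i ∈ Set.Icc 1 k, IsSNSet T (f '' Set.Icc 1 i)

end Phylo

/-! The prefixes `{ℓ 1, …, ℓ i}` (`i ≥ 2`) are exactly the leaves below the spine vertex
`w (k - i + 1)`, and the descendants `D` of a spine vertex `g` are entered only through `g`.
For a triplet `x c | y` with `x, y ∈ D`, witnessed by `u, v` and paths, either `u ∈ D`, and then
`c ∈ D` as a descendant of `u`; or `u, v ∉ D`, and then the paths `u → x` and `v → y` both pass
through `g`, which is an inner vertex of the first one, against internal disjointness. The
singleton `{ℓ 1}` is handled the same way with the unique parent of `ℓ 1` in the role of `g`. -/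

namespace Phylo

variable {V : Type*} {R : V → V → Prop}

section Degrees

lemma IsPhyloNet.outDeg_le_two (hnet : IsPhyloNet R) (v : V) : outDeg R v ≤ 2 := by
  rcases hnet.2.2 v with h | h | h | h <;> omega

variable [Finite V]

lemma not_rel_of_isLf {v : V} (hv : IsLf R v) (y : V) : ¬ R v y := by
  intro hy
  have : {y | R v y} = ∅ := (Set.ncard_eq_zero).mp hv
  exact this.subset hy

lemma outDeg_ne_one {z a b : V} (ha : R z a) (hb : R z b) (hab : a ≠ b) : outDeg R z ≠ 1 :=
  ((Set.one_lt_ncard_iff).mpr ⟨a, b, ha, hb, hab⟩).ne'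

lemma eq_or_eq_of_outDeg_le_two {z a b t : V} (hz : outDeg R z ≤ 2) (ha : R z a) (hb : R z b)
    (hab : a ≠ b) (ht : R z t) : t = a ∨ t = b := by
  by_contra! h
  exact hz.not_gt ((Set.two_lt_ncard_iff).mpr ⟨a, b, t, ha, hb, ht, hab, h.1.symm, h.2.symm⟩)

lemma IsPhyloNet.inDeg_subsingleton (hnet : IsPhyloNet R) {v : V} (hv : outDeg R v ≠ 1) :
    {y | R y v}.Subsingleton := by
  rw [← Set.ncard_le_one_iff_subsingleton]
  rcases hnet.2.2 v with h | h | h | h <;> simp only [inDeg] at h <;> omega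

end Degrees

section Paths

lemma isPth_singleton_iff {x a b : V} : IsPth R [x] a b ↔ x = a ∧ x = b := by
  simp [IsPth, List.Chain']

lemma isPth_cons_cons_iff {x y a b : V} {t : List V} :
    IsPth R (x :: y :: t) a b ↔ x = a ∧ R x y ∧ IsPth R (y :: t) y b := by
  simp only [IsPth, ne_eq, reduceCtorEq, not_false_eq_true, List.head?_cons, Option.some.injEq,
    List.getLast?_cons_cons, List.Chain', List.isChain_cons_cons, true_and, and_congr_right_iff]
  tauto

lemma IsPth.last_mem {p : List V} {a b : V} (hp : IsPth R p a b) : b ∈ p :=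
  List.mem_of_getLast? hp.2.2.1

lemma IsPth.reflTransGen {p : List V} {a b : V} (hp : IsPth R p a b) :
    Relation.ReflTransGen R a b := by
  induction p generalizing a with
  | nil => exact absurd rfl hp.1
  | cons x t ih =>
    rcases t with _ | ⟨y, t⟩
    · obtain ⟨rfl, rfl⟩ := isPth_singleton_iff.mp hp
      rfl
    · obtain ⟨rfl, hxy, hyt⟩ := isPth_cons_cons_iff.mp hp
      exact .head hxy (ih hyt)

lemma IsPth.eq_of_forall_not_rel {p : List V} {a b : V} (hp : IsPth R p a b)
    (ha : ∀ y, ¬ R a y) : b = a := by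
  rcases hp.reflTransGen.cases_head with h | ⟨c, hac, -⟩
  · exact h.symm
  · exact absurd hac (ha c)

lemma IsPth.exists_rel_mem {p : List V} {a b v : V} (hp : IsPth R p a b) (hv : v ∈ p)
    (hva : v ≠ a) : ∃ y ∈ p, R y v := by
  induction p generalizing a with
  | nil => simp at hv
  | cons x t ih =>
    rcases t with _ | ⟨y, t⟩
    · obtain ⟨rfl, -⟩ := isPth_singleton_iff.mp hp
      simp_all
    · obtain ⟨rfl, hxy, hyt⟩ := isPth_cons_cons_iff.mp hp
      have hvt : v ∈ y :: t := (List.mem_cons.mp hv).resolve_left hva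
      by_cases hvy : v = y
      · exact ⟨x, List.mem_cons_self, hvy ▸ hxy⟩
      · obtain ⟨z, hz, hzv⟩ := ih hyt hvt hvy
        exact ⟨z, List.mem_cons_of_mem _ hz, hzv⟩

lemma IsPth.mem_interior {p : List V} {a b v : V} (hp : IsPth R p a b) (hv : v ∈ p)
    (hva : v ≠ a) (hvb : v ≠ b) : v ∈ interior p := by
  obtain ⟨ys, rfl⟩ := List.getLast?_eq_some_iff.mp hp.2.2.1
  rcases ys with _ | ⟨y, ys⟩
  · simp_all
  · have hy : y = a := by simpa using hp.2.1
    simp_all [interior]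

end Paths

section Triplets

lemma ConsistentTrip.swap {x y z : V} (h : ConsistentTrip R x y z) : ConsistentTrip R y x z := by
  obtain ⟨u, v, p1, p2, p3, p4, huv, h1, h2, h3, h4, d12, d13, d14, d23, d24, d34⟩ := h
  exact ⟨u, v, p2, p1, p3, p4, huv, h2, h1, h3, h4, d12.symm, d23, d24, d13, d14, d34⟩

lemma isSNSet_of_consistentTrip {T : Set (V × V × V)} {Y : Set V} (hcons : ConsistentSet R T)
    (hY : Y ⊆ tripLeaves T)
    (hclosed : ∀ x ∈ Y, ∀ y ∈ Y, ∀ c ∈ tripLeaves T, ConsistentTrip R x c y → c ∈ Y) :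
    IsSNSet T Y := by
  refine ⟨hY, fun c x y hx hy hc hxcy => hclosed x hx y hy c hc ?_⟩
  rcases hxcy with h | h
  · exact hcons _ h
  · exact (hcons _ h).swap

lemma eq_of_consistentTrip_self {x c : V} (hx : ∀ y, ¬ R x y) (hin : {y | R y x}.Subsingleton)
    (h : ConsistentTrip R x c x) : c = x := by
  obtain ⟨u, v, px, pc, pu, py, huv, hpx, hpc, hpu, hpy, -, -, dxy, -, -, duy⟩ := h
  by_cases hux : u = x
  · subst hux
    exact hpc.eq_of_forall_not_rel hx
  exfalso
  have hvx : v ≠ x := fun hvx => huv (hvx ▸ hpu.eq_of_forall_not_rel (hvx ▸ hx))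
  obtain ⟨p, hp, hpR⟩ := hpx.exists_rel_mem hpx.last_mem (Ne.symm hux)
  obtain ⟨p', hp', hp'R⟩ := hpy.exists_rel_mem hpy.last_mem (Ne.symm hvx)
  obtain rfl : p = p' := hin hpR hp'R
  have hpne : p ≠ x := fun h => hx x (h ▸ hpR)
  by_cases hpu' : p = u
  · subst hpu'
    exact duy.2 p (hpy.mem_interior hp' huv hpne) hpu.last_mem
  · exact dxy.1 p (hpx.mem_interior hp hpu' hpne) hp'

lemma isSNSet_singleton {T : Set (V × V × V)} {x : V} (hcons : ConsistentSet R T)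
    (hxT : x ∈ tripLeaves T) (hx : ∀ y, ¬ R x y) (hin : {y | R y x}.Subsingleton) :
    IsSNSet T {x} := by
  refine isSNSet_of_consistentTrip hcons (Set.singleton_subset_iff.mpr hxT) ?_
  rintro _ rfl _ rfl c - h
  exact eq_of_consistentTrip_self hx hin h

end Triplets

section Pendant

structure IsPendantAt (R : V → V → Prop) (D : Set V) (g : V) : Prop where
  mem : g ∈ D
  rel_mem : ∀ ⦃z y⦄, z ∈ D → R z y → y ∈ D
  mem_of_rel : ∀ ⦃z y⦄, z ∈ D → z ≠ g → R y z → y ∈ D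

variable {D : Set V} {g : V}

lemma IsPendantAt.mem_of_reflTransGen (hD : IsPendantAt R D g) {a b : V} (ha : a ∈ D)
    (hab : Relation.ReflTransGen R a b) : b ∈ D := by
  induction hab with
  | refl => exact ha
  | tail _ hbc ih => exact hD.rel_mem ih hbc

lemma IsPendantAt.mem_of_isPth (hD : IsPendantAt R D g) {p : List V} {a b : V}
    (hp : IsPth R p a b) (hb : b ∈ D) (ha : a ∉ D) : g ∈ p := by
  induction p generalizing a with
  | nil => exact absurd rfl hp.1
  | cons x t ih =>
    rcases t with _ | ⟨y, t⟩
    · obtain ⟨rfl, rfl⟩ := isPth_singleton_iff.mp hp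
      exact absurd hb ha
    · obtain ⟨rfl, hxy, hyt⟩ := isPth_cons_cons_iff.mp hp
      by_cases hyg : y = g
      · exact hyg ▸ List.mem_cons_of_mem _ List.mem_cons_self
      · have hy : y ∉ D := fun hy => ha (hD.mem_of_rel hy hyg hxy)
        exact List.mem_cons_of_mem _ (ih hyt hy)

lemma IsPendantAt.mem_of_consistentTrip (hD : IsPendantAt R D g) {x y c : V} (hx : x ∈ D)
    (hy : y ∈ D) (hxg : x ≠ g) (h : ConsistentTrip R x c y) : c ∈ D := by
  obtain ⟨u, v, px, pc, pu, py, -, hpx, hpc, hpu, hpy, -, -, dxy, -, -, -⟩ := h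
  by_cases hu : u ∈ D
  · exact hD.mem_of_reflTransGen hu hpc.reflTransGen
  have hv : v ∉ D := fun hv => hu (hD.mem_of_reflTransGen hv hpu.reflTransGen)
  have hgu : g ≠ u := fun hgu => hu (hgu ▸ hD.mem)
  exact absurd (hD.mem_of_isPth hpy hy hv)
    (dxy.1 g (hpx.mem_interior (hD.mem_of_isPth hpx hx hu) hgu (Ne.symm hxg)))

lemma IsPendantAt.isSNSet {T : Set (V × V × V)} (hD : IsPendantAt R D g) (hg : ¬ IsLf R g)
    (hcons : ConsistentSet R T) (hL : netLeaves R = tripLeaves T) :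
    IsSNSet T (D ∩ netLeaves R) := by
  refine isSNSet_of_consistentTrip hcons (hL ▸ Set.inter_subset_right) ?_
  intro x hx y hy c hc h
  exact ⟨hD.mem_of_consistentTrip hx.1 hy.1 (fun hxg => hg (hxg ▸ hx.2)) h, hL ▸ hc⟩

end Pendant

section Caterpillar

structure IsCaterpillar (R : V → V → Prop) (k : ℕ) (w ℓ : ℕ → V) : Prop where
  path : ∀ i, 1 ≤ i → i ≤ k - 2 → R (w i) (w (i + 1))
  hang : ∀ i, 1 ≤ i → i ≤ k - 2 → R (w i) (ℓ (k - i + 1))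
  last_one : R (w (k - 1)) (ℓ 1)
  last_two : R (w (k - 1)) (ℓ 2)
  isLf : ∀ i ∈ Set.Icc 1 k, IsLf R (ℓ i)
  one_ne_two : ℓ 1 ≠ ℓ 2

/-- The vertices below the spine vertex `w r`; its leaves are `ℓ 1, …, ℓ (k - r + 1)`. -/
def caterpillarBelow (k : ℕ) (w ℓ : ℕ → V) (r : ℕ) : Set V :=
  w '' Set.Icc r (k - 1) ∪ ℓ '' Set.Icc 1 (k - r + 1)

namespace IsCaterpillar

variable {k : ℕ} {w ℓ : ℕ → V} (hC : IsCaterpillar R k w ℓ)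
include hC

lemma exists_rel_ℓ {r m : ℕ} (hr : r ∈ Set.Icc 1 (k - 1)) (hm : m ∈ Set.Icc 1 (k - r + 1)) :
    ∃ j ∈ Set.Icc r (k - 1), R (w j) (ℓ m) := by
  obtain ⟨hr1, hrk⟩ := hr
  obtain ⟨hm1, hmr⟩ := hm
  rcases (show m = 1 ∨ m = 2 ∨ 3 ≤ m by omega) with rfl | rfl | hm3
  · exact ⟨k - 1, ⟨hrk, le_rfl⟩, hC.last_one⟩
  · exact ⟨k - 1, ⟨hrk, le_rfl⟩, hC.last_two⟩
  · refine ⟨k - m + 1, ⟨by omega, by omega⟩, ?_⟩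
    simpa [show k - (k - m + 1) + 1 = m by omega] using hC.hang (k - m + 1) (by omega) (by omega)

variable [Finite V]

lemma not_isLf_w {j : ℕ} (hj1 : 1 ≤ j) (hjk : j ≤ k - 1) : ¬ IsLf R (w j) := by
  intro h
  rcases hjk.lt_or_eq with hj | rfl
  · exact not_rel_of_isLf h _ (hC.path j hj1 (by omega))
  · exact not_rel_of_isLf h _ hC.last_one

lemma w_ne_ℓ {j m : ℕ} (hj1 : 1 ≤ j) (hjk : j ≤ k - 1) (hm : m ∈ Set.Icc 1 k) : w j ≠ ℓ m :=
  fun h => hC.not_isLf_w hj1 hjk (h ▸ hC.isLf m hm)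

lemma caterpillarBelow_inter_netLeaves {r : ℕ} (hr : r ∈ Set.Icc 1 (k - 1)) :
    caterpillarBelow k w ℓ r ∩ netLeaves R = ℓ '' Set.Icc 1 (k - r + 1) := by
  obtain ⟨hr1, hrk⟩ := hr
  ext z
  constructor
  · rintro ⟨⟨j, ⟨hrj, hjk⟩, rfl⟩ | hz, hzl⟩
    · exact absurd hzl (hC.not_isLf_w (by omega) hjk)
    · exact hz
  · rintro ⟨m, hm, rfl⟩
    exact ⟨Or.inr ⟨m, hm, rfl⟩, hC.isLf m ⟨hm.1, by have := hm.2; omega⟩⟩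

lemma outDeg_w_ne_one {j : ℕ} (hj1 : 1 ≤ j) (hjk : j ≤ k - 1) : outDeg R (w j) ≠ 1 := by
  rcases hjk.lt_or_eq with hj | rfl
  · exact outDeg_ne_one (hC.path j hj1 (by omega)) (hC.hang j hj1 (by omega))
      (hC.w_ne_ℓ (by omega) (by omega) ⟨by omega, by omega⟩)
  · exact outDeg_ne_one hC.last_one hC.last_two hC.one_ne_two

variable (hnet : IsPhyloNet R)
include hnet

lemma eq_of_rel_w {j : ℕ} {t : V} (hj1 : 1 ≤ j) (hj : j < k - 1) (ht : R (w j) t) :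
    t = w (j + 1) ∨ t = ℓ (k - j + 1) :=
  eq_or_eq_of_outDeg_le_two (hnet.outDeg_le_two _) (hC.path j hj1 (by omega))
    (hC.hang j hj1 (by omega)) (hC.w_ne_ℓ (by omega) (by omega) ⟨by omega, by omega⟩) ht

lemma eq_of_rel_w_last {t : V} (ht : R (w (k - 1)) t) : t = ℓ 1 ∨ t = ℓ 2 :=
  eq_or_eq_of_outDeg_le_two (hnet.outDeg_le_two _) hC.last_one hC.last_two hC.one_ne_two ht

lemma eq_of_rel_w_succ {j : ℕ} {y : V} (hj1 : 1 ≤ j) (hj : j < k - 1) (hy : R y (w (j + 1))) :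
    y = w j :=
  hnet.inDeg_subsingleton (hC.outDeg_w_ne_one (by omega) (by omega)) hy (hC.path j hj1 (by omega))

lemma isPendantAt {r : ℕ} (hr : r ∈ Set.Icc 1 (k - 1)) :
    IsPendantAt R (caterpillarBelow k w ℓ r) (w r) := by
  obtain ⟨hr1, hrk⟩ := hr
  refine ⟨Or.inl ⟨r, ⟨le_rfl, hrk⟩, rfl⟩, ?_, ?_⟩
  · rintro _ t (⟨j, ⟨hrj, hjk⟩, rfl⟩ | ⟨m, hm, rfl⟩) ht
    · rcases hjk.lt_or_eq with hj | rfl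
      · rcases hC.eq_of_rel_w hnet (by omega) hj ht with rfl | rfl
        · exact Or.inl ⟨j + 1, ⟨by omega, by omega⟩, rfl⟩
        · exact Or.inr ⟨k - j + 1, ⟨by omega, by omega⟩, rfl⟩
      · rcases hC.eq_of_rel_w_last hnet ht with rfl | rfl
        · exact Or.inr ⟨1, ⟨le_rfl, by omega⟩, rfl⟩
        · exact Or.inr ⟨2, ⟨by omega, by omega⟩, rfl⟩
    · exact absurd ht (not_rel_of_isLf (hC.isLf m ⟨hm.1, by have := hm.2; omega⟩) t)
  · rintro _ y (⟨j, ⟨hrj, hjk⟩, rfl⟩ | ⟨m, hm, rfl⟩) hne hy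
    · have hj : j = j - 1 + 1 := by omega
      rw [hj] at hy
      have hrj' : r ≠ j := fun h => hne (h ▸ rfl)
      exact Or.inl ⟨j - 1, ⟨by omega, by omega⟩,
        (hC.eq_of_rel_w_succ hnet (by omega) (by omega) hy).symm⟩
    · obtain ⟨j, hj, hjm⟩ := hC.exists_rel_ℓ ⟨hr1, hrk⟩ hm
      have hin := hnet.inDeg_subsingleton (v := ℓ m)
        (by rw [hC.isLf m ⟨hm.1, by have := hm.2; omega⟩]; omega)
      exact Or.inl ⟨j, hj, hin hjm hy⟩

lemma isSNSet_image_Icc {T : Set (V × V × V)} (hcons : ConsistentSet R T)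
    (hL : netLeaves R = tripLeaves T) {i : ℕ} (hi : i ∈ Set.Icc 1 k) :
    IsSNSet T (ℓ '' Set.Icc 1 i) := by
  obtain ⟨hi1, hik⟩ := hi
  rcases hi1.eq_or_lt with rfl | hi2
  · have hlf := hC.isLf 1 ⟨le_rfl, hik⟩
    rw [Set.Icc_self, Set.image_singleton]
    exact isSNSet_singleton hcons (hL ▸ hlf) (not_rel_of_isLf hlf)
      (hnet.inDeg_subsingleton (by rw [hlf]; omega))
  · have hr : k - i + 1 ∈ Set.Icc 1 (k - 1) := ⟨by omega, by omega⟩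
    have hSN := (hC.isPendantAt hnet hr).isSNSet (hC.not_isLf_w hr.1 hr.2) hcons hL
    rwa [hC.caterpillarBelow_inter_netLeaves hr, show k - (k - i + 1) + 1 = i by omega] at hSN

end IsCaterpillar

end Caterpillar

end Phylo

open Phylo in
theorem stmt11_general {V : Type*} [Fintype V] (R : V → V → Prop) (T : Set (V × V × V))
    (hnet : IsPhyloNet R) (hcons : ConsistentSet R T)
    (hL : netLeaves R = tripLeaves T)
    (k : ℕ) (hk : 2 ≤ k) (w ℓ : ℕ → V) (L' : Set V)
    (hlinj : Set.InjOn ℓ (Set.Icc 1 k))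
    (hpath : ∀ i, 1 ≤ i → i ≤ k - 2 → R (w i) (w (i + 1)))
    (hhang : ∀ i, 1 ≤ i → i ≤ k - 2 → R (w i) (ℓ (k - i + 1)))
    (hlast1 : R (w (k - 1)) (ℓ 1)) (hlast2 : R (w (k - 1)) (ℓ 2))
    (hleaves : ∀ i ∈ Set.Icc 1 k, IsLf R (ℓ i))
    (hL' : L' = ℓ '' Set.Icc 1 k) :
    CaterpillarSet T L' := by
  subst hL'
  have hl12 : ℓ 1 ≠ ℓ 2 := fun h => by
    have := hlinj ⟨le_rfl, by omega⟩ ⟨by omega, hk⟩ h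
    omega
  have hC : IsCaterpillar R k w ℓ := ⟨hpath, hhang, hlast1, hlast2, hleaves, hl12⟩
  exact Or.inr ⟨k, ℓ, by omega, hlinj, rfl, fun i hi => hC.isSNSet_image_Icc hnet hcons hL hi⟩

open Phylo in
/-- If a network `R` consistent with the dense triplet set `T` contains
as a subgraph a caterpillar with leaf set `L'` (internal path `w_1 → ⋯ → w_{k-1}`,
leaf `ℓ_{k-i+1}` hanging at `w_i` and leaves `ℓ_1, ℓ_2` at `w_{k-1}`), then `L'` is a
caterpillarset w.r.t. `T`. -/
theorem stmt11 {V : Type*} [Fintype V] (R : V → V → Prop) (T : Set (V × V × V))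
    (hnet : IsPhyloNet R) (hdense : DenseT T) (hcons : ConsistentSet R T)
    (hL : netLeaves R = tripLeaves T)
    (k : ℕ) (hk : 2 ≤ k) (w ℓ : ℕ → V) (L' : Set V)
    (hwinj : Set.InjOn w (Set.Icc 1 (k - 1))) (hlinj : Set.InjOn ℓ (Set.Icc 1 k))
    (hpath : ∀ i, 1 ≤ i → i ≤ k - 2 → R (w i) (w (i + 1)))
    (hhang : ∀ i, 1 ≤ i → i ≤ k - 2 → R (w i) (ℓ (k - i + 1)))
    (hlast1 : R (w (k - 1)) (ℓ 1)) (hlast2 : R (w (k - 1)) (ℓ 2))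
    (hleaves : ∀ i ∈ Set.Icc 1 k, IsLf R (ℓ i))
    (hL' : L' = ℓ '' Set.Icc 1 k) :
    CaterpillarSet T L' :=
  stmt11_general R T hnet hcons hL k hk w ℓ L' hlinj hpath hhang hlast1 hlast2 hleaves hL'
end
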